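/- arXiv:1808.01701 — 5 statements merged into one kernel-verified Lean document; each statement's English description precedes it below -/
import Mathlib

section
/- Let 𝒲 and 𝒵 be finite-dimensional complex Hilbert spaces, let {Δ_1,…,Δ_n} be an orthogonal set of nonzero projection operators on 𝒲, let {Λ_1,…,Λ_n} be an orthogonal set of nonzero projection operators on 𝒵, and let Π = Σ_{k=1}^n Δ_k⊗Λ_k. Let B be a linear operator on 𝒲⊗𝒵 such that B = ΠBΠ and such that B commutes with 1_𝒲⊗Z for every unitary operator Z on 𝒵 satisfying ZΛ_k = Λ_kZ for all k ∈ {1,…,n}. Then there exist linear operators W_1,…,W_n on 𝒲 satisfying W_k = Δ_kW_kΔ_k for each k such that B = Σ_{k=1}^n W_k⊗Λ_k. -/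
open Matrix
open scoped Kronecker

set_option linter.unusedSectionVars false
set_option maxHeartbeats 800000

section AuxStatement9

variable {ιW ιZ : Type*} [Fintype ιW] [Fintype ιZ] [DecidableEq ιW] [DecidableEq ιZ]

lemma aux_one_kron_sub (A B : Matrix ιZ ιZ ℂ) :
    (1 : Matrix ιW ιW ℂ) ⊗ₖ (A - B) = 1 ⊗ₖ A - 1 ⊗ₖ B := by
  ext ⟨a,x⟩ ⟨b,y⟩; simp [kroneckerMap_apply, mul_sub]

lemma aux_one_kron_add (A B : Matrix ιZ ιZ ℂ) :
    (1 : Matrix ιW ιW ℂ) ⊗ₖ (A + B) = 1 ⊗ₖ A + 1 ⊗ₖ B := by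
  ext ⟨a,x⟩ ⟨b,y⟩; simp [kroneckerMap_apply, mul_add]

lemma aux_one_kron_smul (s : ℂ) (A : Matrix ιZ ιZ ℂ) :
    (1 : Matrix ιW ιW ℂ) ⊗ₖ (s • A) = s • (1 ⊗ₖ A) := by
  ext ⟨a,x⟩ ⟨b,y⟩; simp [kroneckerMap_apply]; ring

lemma aux_vmv_mul_vmv (v w x y : ιZ → ℂ) :
    vecMulVec v w * vecMulVec x y = (w ⬝ᵥ x) • vecMulVec v y := by
  ext i j
  simp only [mul_apply, vecMulVec_apply, Matrix.smul_apply, dotProduct, Finset.sum_mul, smul_eq_mul]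
  exact Finset.sum_congr rfl fun z _ => by ring

lemma aux_mul_vmv (Λ : Matrix ιZ ιZ ℂ) (v w : ιZ → ℂ) :
    Λ * vecMulVec v w = vecMulVec (Λ *ᵥ v) w := by
  ext i j
  simp only [mul_apply, vecMulVec_apply, mulVec, dotProduct, Finset.sum_mul]
  exact Finset.sum_congr rfl fun z _ => by ring

lemma aux_vmv_mul (Λ : Matrix ιZ ιZ ℂ) (hΛ : Λ.IsHermitian) (v w : ιZ → ℂ) :
    vecMulVec v (star w) * Λ = vecMulVec v (star (Λ *ᵥ w)) := by
  ext i j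
  simp only [mul_apply, vecMulVec_apply, mulVec, dotProduct, Pi.star_apply, Finset.mul_sum,
    star_sum, star_mul', RCLike.star_def]
  refine Finset.sum_congr rfl fun z _ => ?_
  have : Λ z j = starRingEnd ℂ (Λ j z) := by
    conv_lhs => rw [← hΛ]
    simp [conjTranspose_apply]
  rw [this]; ring

/-- Lemma A : commutation with `1 ⊗ vv*` for `v` in the range of some `Λ k`. -/
lemma aux_rankone_comm {n : ℕ} (Λ : Fin n → Matrix ιZ ιZ ℂ)
    (hΛH : ∀ k, (Λ k).IsHermitian)
    (B : Matrix (ιW × ιZ) (ιW × ιZ) ℂ)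
    (hBcomm : ∀ Z : Matrix ιZ ιZ ℂ, Z ∈ Matrix.unitaryGroup ιZ ℂ →
      (∀ k, Z * Λ k = Λ k * Z) →
      B * ((1 : Matrix ιW ιW ℂ) ⊗ₖ Z) = ((1 : Matrix ιW ιW ℂ) ⊗ₖ Z) * B)
    (k : Fin n) (v : ιZ → ℂ) (hv : ∀ j, Λ j *ᵥ v = if j = k then v else 0) :
    B * ((1 : Matrix ιW ιW ℂ) ⊗ₖ vecMulVec v (star v))
      = ((1 : Matrix ιW ιW ℂ) ⊗ₖ vecMulVec v (star v)) * B := by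
  by_cases hv0 : v = 0
  · have : vecMulVec v (star v) = 0 := by ext i j; simp [vecMulVec_apply, hv0]
    rw [this, Matrix.kronecker_zero, mul_zero, zero_mul]
  set P : Matrix ιZ ιZ ℂ := vecMulVec v (star v) with hP
  set c : ℂ := star v ⬝ᵥ v with hc
  have hcreal : c = ((∑ i, Complex.normSq (v i) : ℝ) : ℂ) := by
    rw [hc, dotProduct]
    push_cast
    refine Finset.sum_congr rfl fun i _ => ?_
    rw [Pi.star_apply, RCLike.star_def, mul_comm, Complex.mul_conj]
  have hc0 : c ≠ 0 := by
    rw [hcreal]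
    intro h
    apply hv0
    have h' : ∑ i, Complex.normSq (v i) = 0 := by exact_mod_cast h
    funext i
    have := (Finset.sum_eq_zero_iff_of_nonneg (fun i _ => Complex.normSq_nonneg (v i))).mp h' i (Finset.mem_univ i)
    simpa [Complex.normSq_eq_zero] using this
  have hcstar : starRingEnd ℂ c = c := by rw [hcreal]; simp
  have hPP : P * P = c • P := by
    rw [hP, aux_vmv_mul_vmv, hc]
  have hPH : Pᴴ = P := by
    ext i j
    simp [hP, conjTranspose_apply, vecMulVec_apply, mul_comm]
  have hPcomm : ∀ j, P * Λ j = Λ j * P := by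
    intro j
    rw [hP, aux_vmv_mul (Λ j) (hΛH j) v v, aux_mul_vmv, hv j]
    by_cases hj : j = k <;> simp [hj, vecMulVec]
  set Z : Matrix ιZ ιZ ℂ := 1 - (2 / c) • P with hZ
  have hZH : Zᴴ = Z := by
    rw [hZ, conjTranspose_sub, conjTranspose_smul, conjTranspose_one, hPH,
      RCLike.star_def, map_div₀, hcstar]
    have h2 : (starRingEnd ℂ) 2 = 2 := map_ofNat _ 2
    rw [h2]
  have hZunit : Z ∈ Matrix.unitaryGroup ιZ ℂ := by
    rw [Matrix.mem_unitaryGroup_iff]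
    show Z * Zᴴ = 1
    rw [hZH, hZ]
    simp only [sub_mul, mul_sub, one_mul, mul_one, smul_mul_assoc, mul_smul_comm, hPP,
      smul_smul]
    match_scalars <;> field_simp <;> ring
  have hZcomm : ∀ j, Z * Λ j = Λ j * Z := by
    intro j
    rw [hZ, sub_mul, mul_sub, one_mul, mul_one, smul_mul_assoc, mul_smul_comm, hPcomm j]
  have h := hBcomm Z hZunit hZcomm
  rw [hZ, aux_one_kron_sub, aux_one_kron_smul, Matrix.one_kronecker_one] at h
  rw [mul_sub, sub_mul, mul_one, one_mul, mul_smul_comm, smul_mul_assoc] at h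
  have h2 : (2 / c) • (B * (1 ⊗ₖ P)) = (2 / c) • ((1 ⊗ₖ P) * B) := sub_right_injective h
  have hs : (2 / c) ≠ 0 := by
    simp [div_eq_zero_iff, hc0]
  exact smul_right_injective (Matrix (ιW × ιZ) (ιW × ιZ) ℂ) hs h2

lemma aux_polar (x y : ιZ → ℂ) :
    (4 : ℂ) • vecMulVec x (star y)
      = vecMulVec (x + y) (star (x + y)) - vecMulVec (x - y) (star (x - y))
        + Complex.I • vecMulVec (x + Complex.I • y) (star (x + Complex.I • y))
        - Complex.I • vecMulVec (x - Complex.I • y) (star (x - Complex.I • y)) := by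
  ext i j
  simp only [Matrix.smul_apply, Matrix.sub_apply, Matrix.add_apply, vecMulVec_apply, Pi.star_apply, Pi.add_apply,
    Pi.sub_apply, Pi.smul_apply, star_add, star_sub, star_mul', smul_eq_mul, star_smul,
    RCLike.star_def, Complex.conj_I]
  linear_combination (2 * (x i * starRingEnd ℂ (y j)) - 2 * (y i * starRingEnd ℂ (x j))) * Complex.I_sq

/-- Lemma B: commutation with `1 ⊗ (Λₖ eₚ)(Λₖ e_q)*`. -/
lemma aux_R_comm {n : ℕ} (Λ : Fin n → Matrix ιZ ιZ ℂ)
    (hΛH : ∀ k, (Λ k).IsHermitian) (hΛI : ∀ k, Λ k * Λ k = Λ k)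
    (hΛorth : ∀ j k, j ≠ k → Λ j * Λ k = 0)
    (B : Matrix (ιW × ιZ) (ιW × ιZ) ℂ)
    (hBcomm : ∀ Z : Matrix ιZ ιZ ℂ, Z ∈ Matrix.unitaryGroup ιZ ℂ →
      (∀ k, Z * Λ k = Λ k * Z) →
      B * ((1 : Matrix ιW ιW ℂ) ⊗ₖ Z) = ((1 : Matrix ιW ιW ℂ) ⊗ₖ Z) * B)
    (k : Fin n) (p q : ιZ) :
    B * ((1 : Matrix ιW ιW ℂ) ⊗ₖ vecMulVec (fun z => Λ k z p) (star (fun z => Λ k z q)))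
      = ((1 : Matrix ιW ιW ℂ) ⊗ₖ vecMulVec (fun z => Λ k z p) (star (fun z => Λ k z q))) * B := by
  set x : ιZ → ℂ := fun z => Λ k z p with hxdef
  set y : ιZ → ℂ := fun z => Λ k z q with hydef
  have hcol : ∀ (j : Fin n) (r : ιZ), Λ j *ᵥ (fun z => Λ k z r)
      = if j = k then (fun z => Λ k z r) else 0 := by
    intro j r
    have key : ∀ i, (Λ j *ᵥ (fun z => Λ k z r)) i = (Λ j * Λ k) i r := by
      intro i; simp [mulVec, dotProduct, mul_apply]
    by_cases hj : j = k
    · subst hj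
      funext i; rw [key i, hΛI j]; simp
    · funext i; rw [key i, hΛorth j k hj]; simp [hj]
  have hx : ∀ j, Λ j *ᵥ x = if j = k then x else 0 := fun j => hcol j p
  have hy : ∀ j, Λ j *ᵥ y = if j = k then y else 0 := fun j => hcol j q
  have hmk : ∀ (a b : ℂ) , ∀ v w : ιZ → ℂ, (∀ j, Λ j *ᵥ v = if j = k then v else 0) →
      (∀ j, Λ j *ᵥ w = if j = k then w else 0) →
      (∀ j, Λ j *ᵥ (a • v + b • w) = if j = k then (a • v + b • w) else 0) := by
    intro a b v w hv hw j
    rw [mulVec_add, mulVec_smul, mulVec_smul, hv j, hw j]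
    split <;> simp
  have h1 := aux_rankone_comm Λ hΛH B hBcomm k (x + y) (by
    have := hmk 1 1 x y hx hy; simpa using this)
  have h2 := aux_rankone_comm Λ hΛH B hBcomm k (x - y) (by
    have := hmk 1 (-1) x y hx hy
    intro j; have := this j; simpa [sub_eq_add_neg] using this)
  have h3 := aux_rankone_comm Λ hΛH B hBcomm k (x + Complex.I • y) (by
    have := hmk 1 Complex.I x y hx hy; simpa using this)
  have h4 := aux_rankone_comm Λ hΛH B hBcomm k (x - Complex.I • y) (by
    have := hmk 1 (-Complex.I) x y hx hy
    intro j; have := this j; simpa [sub_eq_add_neg, neg_smul] using this)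
  have key : B * ((1 : Matrix ιW ιW ℂ) ⊗ₖ ((4:ℂ) • vecMulVec x (star y)))
      = ((1 : Matrix ιW ιW ℂ) ⊗ₖ ((4:ℂ) • vecMulVec x (star y))) * B := by
    rw [aux_polar x y, aux_one_kron_sub, aux_one_kron_add, aux_one_kron_sub,
      aux_one_kron_smul, aux_one_kron_smul]
    rw [mul_sub, mul_add, mul_sub, sub_mul, add_mul, sub_mul,
      mul_smul_comm, mul_smul_comm, smul_mul_assoc, smul_mul_assoc, h1, h2, h3, h4]
  rw [aux_one_kron_smul, mul_smul_comm, smul_mul_assoc] at key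
  exact smul_right_injective (Matrix (ιW × ιZ) (ιW × ιZ) ℂ) (by norm_num : (4:ℂ) ≠ 0) key

lemma aux_one_kron_sum {κ : Type*} (s : Finset κ) (A : κ → Matrix ιZ ιZ ℂ) :
    (1 : Matrix ιW ιW ℂ) ⊗ₖ (∑ p ∈ s, A p) = ∑ p ∈ s, (1 : Matrix ιW ιW ℂ) ⊗ₖ (A p) := by
  ext ⟨a,x⟩ ⟨b,y⟩
  simp only [kroneckerMap_apply, Matrix.sum_apply, Finset.mul_sum]

lemma aux_lam_sum (Λ : Matrix ιZ ιZ ℂ) (hH : Λ.IsHermitian) (hI : Λ * Λ = Λ) :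
    Λ = ∑ p, vecMulVec (fun z => Λ z p) (star (fun z => Λ z p)) := by
  ext i j
  rw [Matrix.sum_apply]
  have : ∀ p, vecMulVec (fun z => Λ z p) (star (fun z => Λ z p)) i j = Λ i p * Λ p j := by
    intro p
    have hpj : starRingEnd ℂ (Λ j p) = Λ p j := by
      conv_rhs => rw [← hH]; simp [conjTranspose_apply]
    simp [vecMulVec_apply, hpj]
  rw [Finset.sum_congr rfl fun p _ => this p]
  conv_lhs => rw [← hI]
  simp [mul_apply]

lemma aux_trace_ne {ιZ : Type*} [Fintype ιZ] [DecidableEq ιZ]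
    (Λ : Matrix ιZ ιZ ℂ) (hH : Λ.IsHermitian) (hI : Λ * Λ = Λ) (hne : Λ ≠ 0) :
    Λ.trace ≠ 0 := by
  intro h0
  apply hne
  have key : Λ.trace = ∑ j, ∑ i, (Complex.normSq (Λ i j) : ℂ) := by
    conv_lhs => rw [← hI]
    rw [trace]
    refine Finset.sum_congr rfl fun j _ => ?_
    simp only [diag_apply, mul_apply]
    refine Finset.sum_congr rfl fun i _ => ?_
    have : Λ j i = starRingEnd ℂ (Λ i j) := by
      conv_lhs => rw [← hH]; simp [conjTranspose_apply]
    rw [this, mul_comm, Complex.mul_conj]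
  rw [key] at h0
  have h0' : ∑ j, ∑ i, Complex.normSq (Λ i j) = 0 := by
    have := congrArg Complex.re h0
    simpa [Complex.ofReal_sum] using this
  ext i j
  have hnn : ∀ j ∈ Finset.univ, (0:ℝ) ≤ ∑ i, Complex.normSq (Λ i j) :=
    fun j _ => Finset.sum_nonneg fun i _ => Complex.normSq_nonneg _
  have h1 := (Finset.sum_eq_zero_iff_of_nonneg hnn).mp h0' j (Finset.mem_univ j)
  have h2 := (Finset.sum_eq_zero_iff_of_nonneg (fun i _ => Complex.normSq_nonneg (Λ i j))).mp h1 i (Finset.mem_univ i)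
  simpa [Complex.normSq_eq_zero] using h2


end AuxStatement9

/-- Given orthogonal families of nonzero (Hermitian, idempotent) projections `Δ_k` on `𝒲`
and `Λ_k` on `𝒵`, set `Π = Σ_k Δ_k ⊗ Λ_k`.  If `B` is an operator on `𝒲 ⊗ 𝒵` with
`B = Π B Π` that commutes with `1_𝒲 ⊗ Z` for every unitary `Z` on `𝒵` commuting with every
`Λ_k`, then `B = Σ_k W_k ⊗ Λ_k` for some operators `W_k` on `𝒲` with `W_k = Δ_k W_k Δ_k`. -/
theorem statement9 {ιW ιZ : Type*} [Fintype ιW] [Fintype ιZ] [DecidableEq ιW] [DecidableEq ιZ]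
    (n : ℕ) (Δ : Fin n → Matrix ιW ιW ℂ) (Λ : Fin n → Matrix ιZ ιZ ℂ)
    (hΔproj : ∀ k, (Δ k).IsHermitian ∧ Δ k * Δ k = Δ k)
    (hΔne : ∀ k, Δ k ≠ 0)
    (hΔorth : ∀ j k, j ≠ k → Δ j * Δ k = 0)
    (hΛproj : ∀ k, (Λ k).IsHermitian ∧ Λ k * Λ k = Λ k)
    (hΛne : ∀ k, Λ k ≠ 0)
    (hΛorth : ∀ j k, j ≠ k → Λ j * Λ k = 0)
    (B : Matrix (ιW × ιZ) (ιW × ιZ) ℂ)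
    (hB : B = (∑ k, Δ k ⊗ₖ Λ k) * B * (∑ k, Δ k ⊗ₖ Λ k))
    (hBcomm : ∀ Z : Matrix ιZ ιZ ℂ, Z ∈ Matrix.unitaryGroup ιZ ℂ →
      (∀ k, Z * Λ k = Λ k * Z) →
      B * ((1 : Matrix ιW ιW ℂ) ⊗ₖ Z) = ((1 : Matrix ιW ιW ℂ) ⊗ₖ Z) * B) :
    ∃ W : Fin n → Matrix ιW ιW ℂ,
      (∀ k, W k = Δ k * W k * Δ k) ∧ B = ∑ k, (W k) ⊗ₖ (Λ k) := by
  have hΛH : ∀ k, (Λ k).IsHermitian := fun k => (hΛproj k).1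
  have hΛI : ∀ k, Λ k * Λ k = Λ k := fun k => (hΛproj k).2
  have hΔI : ∀ k, Δ k * Δ k = Δ k := fun k => (hΔproj k).2
  -- commutation with 1 ⊗ Λ k
  have commΛ : ∀ k, B * (1 ⊗ₖ Λ k) = (1 ⊗ₖ Λ k) * B := by
    intro k
    conv_lhs => rw [aux_lam_sum (Λ k) (hΛH k) (hΛI k)]
    conv_rhs => rw [aux_lam_sum (Λ k) (hΛH k) (hΛI k)]
    rw [aux_one_kron_sum, Finset.mul_sum, Finset.sum_mul]
    exact Finset.sum_congr rfl fun p _ => aux_R_comm Λ hΛH hΛI hΛorth B hBcomm k p p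
  set C : Fin n → Matrix (ιW × ιZ) (ιW × ιZ) ℂ :=
    fun k => (Δ k ⊗ₖ Λ k) * B * (Δ k ⊗ₖ Λ k) with hCdef
  -- splitting of B
  have hcross : ∀ j k, j ≠ k → (Δ j ⊗ₖ Λ j) * B * (Δ k ⊗ₖ Λ k) = 0 := by
    intro j k hjk
    have e1 : Δ j ⊗ₖ Λ j = (Δ j ⊗ₖ Λ j) * (1 ⊗ₖ Λ j) := by
      rw [← mul_kronecker_mul, mul_one, hΛI]
    have e2 : (1 ⊗ₖ Λ j) * (Δ k ⊗ₖ Λ k) = (0 : Matrix (ιW × ιZ) (ιW × ιZ) ℂ) := by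
      rw [← mul_kronecker_mul, one_mul, hΛorth j k hjk, Matrix.kronecker_zero]
    calc (Δ j ⊗ₖ Λ j) * B * (Δ k ⊗ₖ Λ k)
        = (Δ j ⊗ₖ Λ j) * ((1 ⊗ₖ Λ j) * B) * (Δ k ⊗ₖ Λ k) := by
          conv_lhs => rw [e1]
          rw [mul_assoc (Δ j ⊗ₖ Λ j) (1 ⊗ₖ Λ j) B]
      _ = (Δ j ⊗ₖ Λ j) * (B * (1 ⊗ₖ Λ j)) * (Δ k ⊗ₖ Λ k) := by rw [commΛ j]
      _ = (Δ j ⊗ₖ Λ j) * B * ((1 ⊗ₖ Λ j) * (Δ k ⊗ₖ Λ k)) := by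
          rw [← mul_assoc, mul_assoc ((Δ j ⊗ₖ Λ j) * B)]
      _ = 0 := by rw [e2, mul_zero]
  have hBsplit : B = ∑ k, C k := by
    conv_lhs => rw [hB]
    rw [Finset.sum_mul, Finset.sum_mul]
    refine Finset.sum_congr rfl fun j _ => ?_
    rw [Finset.mul_sum]
    exact Finset.sum_eq_single j (fun b _ hb => hcross j b (Ne.symm hb))
      (fun h => absurd (Finset.mem_univ j) h)
  -- per-k existence
  have hper : ∀ k, ∃ Wk : Matrix ιW ιW ℂ, Wk = Δ k * Wk * Δ k ∧ C k = Wk ⊗ₖ Λ k := by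
    intro k
    set P : Matrix (ιW × ιZ) (ιW × ιZ) ℂ := Δ k ⊗ₖ Λ k with hPdef
    have hPP : P * P = P := by
      rw [hPdef, ← mul_kronecker_mul, hΔI, hΛI]
    have hCP : C k * (1 ⊗ₖ Λ k) = C k := by
      show P * B * P * (1 ⊗ₖ Λ k) = P * B * P
      rw [mul_assoc (P * B) P, hPdef, ← mul_kronecker_mul, mul_one, hΛI]
    have hfix : ∀ r, Λ k *ᵥ (fun z => Λ k z r) = fun z => Λ k z r := by
      intro r; funext i
      have h : (Λ k *ᵥ fun z => Λ k z r) i = (Λ k * Λ k) i r := by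
        simp [mulVec, dotProduct, mul_apply]
      rw [h, hΛI]
    have hswap : ∀ p q, P * (1 ⊗ₖ vecMulVec (fun z => Λ k z p) (star (fun z => Λ k z q)))
        = (1 ⊗ₖ vecMulVec (fun z => Λ k z p) (star (fun z => Λ k z q))) * P := by
      intro p q
      rw [hPdef, ← mul_kronecker_mul, ← mul_kronecker_mul, mul_one, one_mul]
      congr 1
      rw [aux_mul_vmv, hfix, aux_vmv_mul _ (hΛH k), hfix]
    have hCR : ∀ p q, C k * (1 ⊗ₖ vecMulVec (fun z => Λ k z p) (star (fun z => Λ k z q)))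
        = (1 ⊗ₖ vecMulVec (fun z => Λ k z p) (star (fun z => Λ k z q))) * C k := by
      intro p q
      set R : Matrix (ιW × ιZ) (ιW × ιZ) ℂ :=
        1 ⊗ₖ vecMulVec (fun z => Λ k z p) (star (fun z => Λ k z q)) with hRdef
      have hBR : B * R = R * B := aux_R_comm Λ hΛH hΛI hΛorth B hBcomm k p q
      show P * B * P * R = R * (P * B * P)
      calc P * B * P * R = P * B * (P * R) := by rw [mul_assoc (P * B)]
        _ = P * B * (R * P) := by rw [hswap p q]
        _ = P * (B * R) * P := by rw [← mul_assoc, mul_assoc P B R]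
        _ = P * (R * B) * P := by rw [hBR]
        _ = (P * R) * B * P := by rw [← mul_assoc]
        _ = (R * P) * B * P := by rw [hswap p q]
        _ = R * (P * B * P) := by rw [mul_assoc, mul_assoc, mul_assoc]
    have hconj : ∀ i j, starRingEnd ℂ (Λ k i j) = Λ k j i := by
      intro i j
      conv_rhs => rw [← hΛH k]
      simp [conjTranspose_apply]
    set t : ℂ := (Λ k).trace with htdef
    set M : Matrix ιW ιW ℂ := Matrix.of (fun a b => ∑ q, ∑ z, Λ k q z * C k (a,z) (b,q)) with hMdef
    have hCe : ∀ a x b y, ∑ z, C k (a,x) (b,z) * Λ k z y = C k (a,x) (b,y) := by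
      intro a x b y
      have h := congrFun (congrFun hCP (a,x)) (b,y)
      rw [mul_apply, Fintype.sum_prod_type] at h
      simpa [kroneckerMap_apply, one_apply, ite_mul, mul_ite] using h
    have hq : ∀ a x b y q, (∑ z, C k (a,x) (b,z) * (Λ k z y * Λ k q q))
        = ∑ z, Λ k x y * Λ k q z * C k (a,z) (b,q) := by
      intro a x b y q
      have h := congrFun (congrFun (hCR y q) (a,x)) (b,q)
      rw [mul_apply, mul_apply, Fintype.sum_prod_type, Fintype.sum_prod_type] at h
      simpa [kroneckerMap_apply, one_apply, vecMulVec_apply, ite_mul, mul_ite, hconj,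
        mul_assoc] using h
    have hKey : ∀ a x b y, t * C k (a,x) (b,y) = M a b * Λ k x y := by
      intro a x b y
      have e1 : t * C k (a,x) (b,y) = ∑ q, Λ k q q * C k (a,x) (b,y) := by
        rw [htdef, trace, Finset.sum_mul]
        exact Finset.sum_congr rfl fun q _ => rfl
      rw [e1]
      have e2 : ∀ q, Λ k q q * C k (a,x) (b,y) = ∑ z, C k (a,x) (b,z) * (Λ k z y * Λ k q q) := by
        intro q
        rw [← hCe a x b y, Finset.mul_sum]
        exact Finset.sum_congr rfl fun z _ => by ring
      rw [Finset.sum_congr rfl fun q _ => e2 q]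
      rw [Finset.sum_congr rfl fun q _ => hq a x b y q]
      rw [hMdef]
      simp only [Matrix.of_apply]
      rw [Finset.sum_mul]
      refine Finset.sum_congr rfl fun q _ => ?_
      rw [Finset.sum_mul]
      exact Finset.sum_congr rfl fun z _ => by ring
    have tne : t ≠ 0 := aux_trace_ne (Λ k) (hΛH k) (hΛI k) (hΛne k)
    have hCt : t • C k = M ⊗ₖ Λ k := by
      ext ⟨a,x⟩ ⟨b,y⟩
      rw [Matrix.smul_apply, kroneckerMap_apply, smul_eq_mul]
      exact hKey a x b y
    set X : Matrix ιW ιW ℂ := t⁻¹ • M with hXdef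
    have hCk2 : C k = X ⊗ₖ Λ k := by
      rw [hXdef, smul_kronecker, ← hCt, smul_smul, inv_mul_cancel₀ tne, one_smul]
    refine ⟨Δ k * X * Δ k, ?_, ?_⟩
    · have h1 : Δ k * (Δ k * X * Δ k) = Δ k * X * Δ k := by
        rw [← mul_assoc, ← mul_assoc, hΔI]
      have h2 : (Δ k * X * Δ k) * Δ k = Δ k * X * Δ k := by
        rw [mul_assoc, hΔI]
      conv_rhs => rw [h1, h2]
    · have e3 : (Δ k * X * Δ k) ⊗ₖ Λ k = P * (X ⊗ₖ Λ k) * P := by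
        rw [hPdef, ← mul_kronecker_mul, ← mul_kronecker_mul]
        rw [show Λ k * Λ k * Λ k = Λ k from by rw [hΛI, hΛI]]
      rw [e3, ← hCk2]
      show P * B * P = P * (P * B * P) * P
      have h1 : P * (P * B * P) = P * B * P := by
        rw [← mul_assoc, ← mul_assoc, hPP]
      have h2 : (P * B * P) * P = P * B * P := by rw [mul_assoc, hPP]
      rw [h1, h2]
  choose W hW1 hW2 using hper
  refine ⟨W, hW1, ?_⟩
  rw [hBsplit]
  exact Finset.sum_congr rfl fun k _ => hW2 k
end

section
/- Let 𝒲 and 𝒵 be finite-dimensional complex Hilbert spaces, let {Δ_1,…,Δ_n} be an orthogonal set of nonzero projection operators on 𝒲, let {Λ_1,…,Λ_n} be an orthogonal set of nonzero projection operators on 𝒵, and let Π = Σ_{k=1}^n Δ_k⊗Λ_k. Let A be a unitary operator on 𝒲⊗𝒵 with AΠ = ΠA, and suppose ΠAΠ = Σ_{k=1}^n W_k⊗Λ_k where each W_k is a linear operator on 𝒲 satisfying W_k = Δ_kW_kΔ_k. Then W_k*W_k = Δ_k and W_kW_k* = Δ_k for every k ∈ {1,…,n}; consequently the operator W = W_1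 + ⋯ + W_n + (1_𝒲 − Δ_1 − ⋯ − Δ_n) is unitary. -/
open Matrix
open scoped Kronecker

section helpers
variable {l m n p : Type*}

lemma kron_conjTranspose (A : Matrix l m ℂ) (B : Matrix n p ℂ) :
    (A ⊗ₖ B)ᴴ = Aᴴ ⊗ₖ Bᴴ := by
  ext ⟨i1, i2⟩ ⟨j1, j2⟩
  simp [conjTranspose_apply, kronecker_apply, mul_comm]

lemma sub_kron (A B : Matrix l m ℂ) (C : Matrix n p ℂ) :
    (A - B) ⊗ₖ C = A ⊗ₖ C - B ⊗ₖ C := by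
  ext ⟨i1, i2⟩ ⟨j1, j2⟩
  simp [kronecker_apply, sub_mul]

lemma kron_eq_zero {A : Matrix l m ℂ} {B : Matrix n p ℂ} (h : A ⊗ₖ B = 0) (hB : B ≠ 0) :
    A = 0 := by
  obtain ⟨c, d, hcd⟩ : ∃ c d, B c d ≠ 0 := by
    by_contra hc
    push_neg at hc
    exact hB (by ext c d; simp [hc])
  ext a b
  have := congrFun (congrFun h (a, c)) (b, d)
  simp only [kronecker_apply, Matrix.zero_apply] at this
  simpa [hcd] using mul_eq_zero.mp this |>.resolve_right hcd

end helpers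

/-- Given orthogonal families of nonzero (Hermitian, idempotent) projections `Δ_k` on `𝒲`
and `Λ_k` on `𝒵`, set `Π = Σ_k Δ_k ⊗ Λ_k`.  If `A` is a unitary on `𝒲 ⊗ 𝒵` commuting with
`Π` and `Π A Π = Σ_k W_k ⊗ Λ_k` with `W_k = Δ_k W_k Δ_k`, then `W_k* W_k = Δ_k` and
`W_k W_k* = Δ_k` for every `k`, and `W = Σ_k W_k + (1 - Σ_k Δ_k)` is unitary. -/
theorem statement10 {ιW ιZ : Type*} [Fintype ιW] [Fintype ιZ] [DecidableEq ιW] [DecidableEq ιZ]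
    (n : ℕ) (Δ : Fin n → Matrix ιW ιW ℂ) (Λ : Fin n → Matrix ιZ ιZ ℂ)
    (hΔproj : ∀ k, (Δ k).IsHermitian ∧ Δ k * Δ k = Δ k)
    (hΔne : ∀ k, Δ k ≠ 0)
    (hΔorth : ∀ j k, j ≠ k → Δ j * Δ k = 0)
    (hΛproj : ∀ k, (Λ k).IsHermitian ∧ Λ k * Λ k = Λ k)
    (hΛne : ∀ k, Λ k ≠ 0)
    (hΛorth : ∀ j k, j ≠ k → Λ j * Λ k = 0)
    (A : Matrix (ιW × ιZ) (ιW × ιZ) ℂ)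
    (hAunitary : A ∈ Matrix.unitaryGroup (ιW × ιZ) ℂ)
    (hAcomm : A * (∑ k, Δ k ⊗ₖ Λ k) = (∑ k, Δ k ⊗ₖ Λ k) * A)
    (W : Fin n → Matrix ιW ιW ℂ)
    (hW : ∀ k, W k = Δ k * W k * Δ k)
    (hdecomp : (∑ k, Δ k ⊗ₖ Λ k) * A * (∑ k, Δ k ⊗ₖ Λ k) = ∑ k, (W k) ⊗ₖ (Λ k)) :
    (∀ k, (W k)ᴴ * W k = Δ k ∧ W k * (W k)ᴴ = Δ k) ∧
      ((∑ k, W k) + (1 - ∑ k, Δ k)) ∈ Matrix.unitaryGroup ιW ℂ := by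
  set PP : Matrix (ιW × ιZ) (ιW × ιZ) ℂ := ∑ k, Δ k ⊗ₖ Λ k with hPPdef
  -- basic facts about PP
  have hPP2 : PP * PP = PP := by
    rw [hPPdef, Finset.sum_mul_sum]
    refine Finset.sum_congr rfl fun j _ => ?_
    rw [Finset.sum_eq_single j]
    · rw [← mul_kronecker_mul, (hΔproj j).2, (hΛproj j).2]
    · intro k _ hk
      rw [← mul_kronecker_mul, hΔorth j k (Ne.symm hk), zero_kronecker]
    · simp
  have hPPH : PPᴴ = PP := by
    rw [hPPdef, conjTranspose_sum]
    exact Finset.sum_congr rfl fun k _ => by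
      rw [kron_conjTranspose, (hΔproj k).1.eq, (hΛproj k).1.eq]
  have hA1 : Aᴴ * A = 1 := by
    have := mem_unitaryGroup_iff'.mp hAunitary
    rwa [star_eq_conjTranspose] at this
  have hA1' : A * Aᴴ = 1 := by
    have := mem_unitaryGroup_iff.mp hAunitary
    rwa [star_eq_conjTranspose] at this
  have hPAP : PP * A * PP = A * PP := by
    rw [← hAcomm, mul_assoc, hPP2]
  -- the two key kronecker sum identities
  have e1 : (∑ k, W k ⊗ₖ Λ k)ᴴ * (∑ k, W k ⊗ₖ Λ k) = PP := by
    rw [← hdecomp, hPAP, conjTranspose_mul, hPPH]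
    calc PP * Aᴴ * (A * PP) = PP * (Aᴴ * A) * PP := by
          rw [mul_assoc, mul_assoc, mul_assoc]
      _ = PP * PP := by rw [hA1, mul_one]
      _ = PP := hPP2
  have e2 : (∑ k, W k ⊗ₖ Λ k) * (∑ k, W k ⊗ₖ Λ k)ᴴ = PP := by
    rw [← hdecomp, hPAP, conjTranspose_mul, hPPH]
    calc A * PP * (PP * Aᴴ) = A * (PP * PP) * Aᴴ := by
          rw [mul_assoc, mul_assoc, mul_assoc]
      _ = A * PP * Aᴴ := by rw [hPP2]
      _ = PP * A * Aᴴ := by rw [hAcomm]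
      _ = PP := by rw [mul_assoc, hA1', mul_one]
  -- expand e1 to a single sum
  have e1' : ∑ k, ((W k)ᴴ * W k) ⊗ₖ Λ k = PP := by
    rw [← e1, conjTranspose_sum, Finset.sum_mul_sum]
    refine (Finset.sum_congr rfl fun j _ => ?_).symm
    rw [Finset.sum_eq_single j]
    · rw [kron_conjTranspose, (hΛproj j).1.eq, ← mul_kronecker_mul, (hΛproj j).2]
    · intro k _ hk
      rw [kron_conjTranspose, (hΛproj j).1.eq, ← mul_kronecker_mul,
        hΛorth j k (Ne.symm hk), kronecker_zero]
    · simp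
  have e2' : ∑ k, (W k * (W k)ᴴ) ⊗ₖ Λ k = PP := by
    rw [← e2, conjTranspose_sum, Finset.sum_mul_sum]
    refine (Finset.sum_congr rfl fun j _ => ?_).symm
    rw [Finset.sum_eq_single j]
    · rw [kron_conjTranspose, (hΛproj j).1.eq, ← mul_kronecker_mul, (hΛproj j).2]
    · intro k _ hk
      rw [kron_conjTranspose, (hΛproj k).1.eq, ← mul_kronecker_mul,
        hΛorth j k (Ne.symm hk), kronecker_zero]
    · simp
  -- extraction
  have extract : ∀ (M : Fin n → Matrix ιW ιW ℂ), (∑ k, M k ⊗ₖ Λ k) = 0 → ∀ j, M j = 0 := by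
    intro M hM j
    have h2 : (∑ k, M k ⊗ₖ Λ k) * ((1 : Matrix ιW ιW ℂ) ⊗ₖ Λ j) = M j ⊗ₖ Λ j := by
      rw [Finset.sum_mul]
      rw [Finset.sum_eq_single j]
      · rw [← mul_kronecker_mul, mul_one, (hΛproj j).2]
      · intro k _ hk
        rw [← mul_kronecker_mul, hΛorth k j hk, kronecker_zero]
      · simp
    rw [hM, zero_mul] at h2
    exact kron_eq_zero h2.symm (hΛne j)
  have hWk : ∀ k, (W k)ᴴ * W k = Δ k := by
    intro j
    have hz : ∑ k, ((W k)ᴴ * W k - Δ k) ⊗ₖ Λ k = 0 := by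
      simp only [sub_kron, Finset.sum_sub_distrib, e1', ← hPPdef, sub_self]
    have := extract _ hz j
    exact sub_eq_zero.mp this
  have hWk' : ∀ k, W k * (W k)ᴴ = Δ k := by
    intro j
    have hz : ∑ k, (W k * (W k)ᴴ - Δ k) ⊗ₖ Λ k = 0 := by
      simp only [sub_kron, Finset.sum_sub_distrib, e2', ← hPPdef, sub_self]
    exact sub_eq_zero.mp (extract _ hz j)
  refine ⟨fun k => ⟨hWk k, hWk' k⟩, ?_⟩
  -- unitarity of W
  set S : Matrix ιW ιW ℂ := ∑ k, W k with hSdef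
  set P : Matrix ιW ιW ℂ := ∑ k, Δ k with hPdef
  have hΔWkk : ∀ k, Δ k * W k = W k := by
    intro k
    conv_lhs => rw [hW k]
    rw [← mul_assoc, ← mul_assoc, (hΔproj k).2, ← hW k]
  have hWΔkk : ∀ k, W k * Δ k = W k := by
    intro k
    conv_lhs => rw [hW k]
    rw [mul_assoc, (hΔproj k).2, ← hW k]
  have hΔW : ∀ j k, j ≠ k → Δ j * W k = 0 := by
    intro j k hjk
    calc Δ j * W k = Δ j * (Δ k * W k) := by rw [hΔWkk]
      _ = Δ j * Δ k * W k := (mul_assoc _ _ _).symm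
      _ = 0 := by rw [hΔorth j k hjk, zero_mul]
  have hWΔ : ∀ j k, j ≠ k → W k * Δ j = 0 := by
    intro j k hjk
    calc W k * Δ j = W k * Δ k * Δ j := by rw [hWΔkk]
      _ = W k * (Δ k * Δ j) := mul_assoc _ _ _
      _ = 0 := by rw [hΔorth k j (Ne.symm hjk), mul_zero]
  have hWHΔ : ∀ j k, j ≠ k → (W k)ᴴ * Δ j = 0 := by
    intro j k hjk
    have : (Δ j * W k)ᴴ = 0 := by rw [hΔW j k hjk, conjTranspose_zero]
    rwa [conjTranspose_mul, (hΔproj j).1.eq] at this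
  have hΔWH : ∀ j k, j ≠ k → Δ j * (W k)ᴴ = 0 := by
    intro j k hjk
    have : (W k * Δ j)ᴴ = 0 := by rw [hWΔ j k hjk, conjTranspose_zero]
    rwa [conjTranspose_mul, (hΔproj j).1.eq] at this
  have hP2 : P * P = P := by
    rw [hPdef, Finset.sum_mul_sum]
    refine Finset.sum_congr rfl fun j _ => ?_
    rw [Finset.sum_eq_single j]
    · exact (hΔproj j).2
    · intro k _ hk; exact hΔorth j k (Ne.symm hk)
    · simp
  have hPH : Pᴴ = P := by
    rw [hPdef, conjTranspose_sum]
    exact Finset.sum_congr rfl fun k _ => (hΔproj k).1.eq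
  have hSHS : Sᴴ * S = P := by
    rw [hSdef, hPdef, conjTranspose_sum, Finset.sum_mul_sum]
    refine Finset.sum_congr rfl fun j _ => ?_
    rw [Finset.sum_eq_single j]
    · exact hWk j
    · intro k _ hk
      calc (W j)ᴴ * W k = (W j)ᴴ * (Δ k * W k) := by rw [hΔWkk]
        _ = (W j)ᴴ * Δ k * W k := (mul_assoc _ _ _).symm
        _ = 0 := by rw [hWHΔ k j hk, zero_mul]
    · simp
  have hSSH : S * Sᴴ = P := by
    rw [hSdef, hPdef, conjTranspose_sum, Finset.sum_mul_sum]
    refine Finset.sum_congr rfl fun j _ => ?_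
    rw [Finset.sum_eq_single j]
    · exact hWk' j
    · intro k _ hk
      calc W j * (W k)ᴴ = W j * Δ j * (W k)ᴴ := by rw [hWΔkk]
        _ = W j * (Δ j * (W k)ᴴ) := mul_assoc _ _ _
        _ = 0 := by rw [hΔWH j k (Ne.symm hk), mul_zero]
    · simp
  have hPS : P * S = S := by
    rw [hPdef, hSdef, Finset.sum_mul_sum]
    refine Finset.sum_congr rfl fun j _ => ?_
    rw [Finset.sum_eq_single j]
    · exact hΔWkk j
    · intro k _ hk; exact hΔW j k (Ne.symm hk)
    · simp
  have hSP : S * P = S := by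
    rw [hPdef, hSdef, Finset.sum_mul_sum]
    refine Finset.sum_congr rfl fun j _ => ?_
    rw [Finset.sum_eq_single j]
    · exact hWΔkk j
    · intro k _ hk; exact hWΔ k j hk
    · simp
  have hPSH : P * Sᴴ = Sᴴ := by
    have : (S * P)ᴴ = Sᴴ := by rw [hSP]
    rwa [conjTranspose_mul, hPH] at this
  have hSHP : Sᴴ * P = Sᴴ := by
    have : (P * S)ᴴ = Sᴴ := by rw [hPS]
    rwa [conjTranspose_mul, hPH] at this
  have hstar : star (S + (1 - P)) = Sᴴ + (1 - P) := by
    rw [star_eq_conjTranspose, conjTranspose_add, conjTranspose_sub, conjTranspose_one, hPH]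
  constructor
  · rw [star_eq_conjTranspose] at hstar ⊢
    rw [hstar]
    calc (Sᴴ + (1 - P)) * (S + (1 - P))
        = Sᴴ * S + Sᴴ * (1 - P) + ((1 - P) * S + (1 - P) * (1 - P)) := by
          rw [add_mul, mul_add, mul_add]
      _ = P + 0 + (0 + (1 - P)) := by
          rw [hSHS, mul_sub, mul_one, hSHP, sub_self, sub_mul, one_mul, hPS, sub_self,
            mul_sub, mul_one, sub_mul, one_mul, hP2, sub_self, sub_zero]
      _ = 1 := by abel
  · rw [star_eq_conjTranspose] at hstar ⊢
    rw [hstar]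
    calc (S + (1 - P)) * (Sᴴ + (1 - P))
        = S * Sᴴ + S * (1 - P) + ((1 - P) * Sᴴ + (1 - P) * (1 - P)) := by
          rw [add_mul, mul_add, mul_add]
      _ = P + 0 + (0 + (1 - P)) := by
          rw [hSSH, mul_sub, mul_one, hSP, sub_self, sub_mul, one_mul, hPSH, sub_self,
            mul_sub, mul_one, sub_mul, one_mul, hP2, sub_self, sub_zero]
      _ = 1 := by abel
end

section
/- Fix positive integers m, k and a transition function δ : Q×Γ → ℂ^{Q×Γ×{−1,+1}} of a quantum Turing machine with state set Q = {1,…,m} and tape alphabet Γ = {0,…,k−1}. If the evolution operator U_δ on ℋ is unitary, then for every integer N ≥ 5 the looped evolution operator U_{δ,N} on ℋ_N is unitary. -/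
open scoped ComplexConjugate Classical

/-- Tape-head directions, `true ↦ +1` and `false ↦ -1`. -/
def dirInt (D : Bool) : ℤ := if D then 1 else -1

/-- A tape over `ℤ` with alphabet `Γ = {0, …, k-1}`: a finitely supported function
`ℤ → Fin k` (the blank symbol is `0`). -/
def TapeZ (k : ℕ) [NeZero k] : Type := {T : ℤ → Fin k // (Function.support T).Finite}

/-- A configuration of a quantum Turing machine with state set `Q = Fin m` and tape
alphabet `Γ = Fin k`: a state, a head position, and a tape. -/
def ConfigZ (m k : ℕ) [NeZero k] : Type := Fin m × ℤ × TapeZ k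

/-- Overwriting the tape square indexed by `i` with the symbol `a`. -/
noncomputable def TapeZ.update {k : ℕ} [NeZero k] (T : TapeZ k) (i : ℤ) (a : Fin k) :
    TapeZ k :=
  ⟨Function.update T.1 i a, by
    apply Set.Finite.subset (T.2.insert i)
    intro x hx
    rcases eq_or_ne x i with h | h
    · exact h ▸ Set.mem_insert _ _
    · refine Set.mem_insert_iff.mpr (Or.inr ?_)
      simpa [Function.mem_support, Function.update_apply, h] using hx⟩

/-- The matrix (kernel) of the evolution operator `U_δ` on the Hilbert space `ℋ` spanned by
configurations: the entry indexed by `(c', c)` is the amplitude `⟨c'| U_δ |c⟩` determined by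
`U_δ |p,i,T⟩ = Σ_{q,a,D} δ(p, T(i))[q,a,D] |q, i+D, T_{i,a}⟩`. -/
noncomputable def QTMkernelZ (m k : ℕ) [NeZero k]
    (δ : Fin m × Fin k → Fin m × Fin k × Bool → ℂ) :
    ConfigZ m k → ConfigZ m k → ℂ :=
  fun c' c => ∑ x : Fin m × Fin k × Bool,
    if c'.1 = x.1 ∧ c'.2.1 = c.2.1 + dirInt x.2.2 ∧
        c'.2.2 = TapeZ.update c.2.2 c.2.1 x.2.1
    then δ (c.1, c.2.2.1 c.2.1) x else 0

/-- A kernel `M : α → α → ℂ` is unitary if `M* M = 1` and `M M* = 1`, where the matrix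
products are given by (absolutely convergent) sums over `α`; this expresses that the
induced operator on `ℓ²(α)` is unitary. -/
def IsUnitaryKernel {α : Type*} (M : α → α → ℂ) : Prop :=
  (∀ c₁ c₂ : α, ∑' c : α, conj (M c c₁) * M c c₂ = if c₁ = c₂ then 1 else 0) ∧
  (∀ c₁ c₂ : α, ∑' c : α, M c₁ c * conj (M c₂ c) = if c₁ = c₂ then 1 else 0)

/-- A configuration of the machine running on a tape loop of length `N`. -/
abbrev ConfigN (m k N : ℕ) : Type := Fin m × ZMod N × (ZMod N → Fin k)

/-- The matrix of the looped evolution operator `U_{δ,N}` on `ℋ_N`, defined by the same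
formula as `U_δ` with head movement computed modulo `N`. -/
noncomputable def QTMkernelN (m k N : ℕ) [NeZero N]
    (δ : Fin m × Fin k → Fin m × Fin k × Bool → ℂ) :
    Matrix (ConfigN m k N) (ConfigN m k N) ℂ :=
  Matrix.of fun c' c => ∑ x : Fin m × Fin k × Bool,
    if c'.1 = x.1 ∧ c'.2.1 = c.2.1 + (dirInt x.2.2 : ZMod N) ∧
        c'.2.2 = Function.update c.2.2 c.2.1 x.2.1
    then δ (c.1, c.2.2 c.2.1) x else 0


set_option linter.unusedSectionVars false
set_option linter.unreachableTactic false
set_option linter.unusedTactic false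
set_option linter.unusedVariables false
set_option maxHeartbeats 1000000



lemma dirInt_inj : Function.Injective dirInt := by decide

lemma update_eq_update_iff_same {α β : Type*} [DecidableEq α] (f g : α → β) (i : α) (a b : β) :
    Function.update f i a = Function.update g i b ↔ a = b ∧ ∀ x, x ≠ i → f x = g x := by
  constructor
  · intro h
    constructor
    · have := congrFun h i; simpa using this
    · intro x hx
      have := congrFun h x
      simpa [Function.update_of_ne hx] using this
  · rintro ⟨rfl, h⟩
    funext x
    rcases eq_or_ne x i with rfl | hx
    · simp
    · simp [Function.update_of_ne hx, h x hx]

lemma update_eq_update_iff_ne {α β : Type*} [DecidableEq α] (f g : α → β) {i j : α}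
    (hij : i ≠ j) (a b : β) :
    Function.update f i a = Function.update g j b ↔
      a = g i ∧ b = f j ∧ ∀ x, x ≠ i → x ≠ j → f x = g x := by
  constructor
  · intro h
    refine ⟨?_, ?_, ?_⟩
    · have := congrFun h i; simpa [Function.update_of_ne hij.symm.symm, Function.update_of_ne hij] using this
    · have := congrFun h j; simp [Function.update_of_ne hij.symm] at this; exact this.symm
    · intro x hxi hxj
      have := congrFun h x
      simpa [Function.update_of_ne hxi, Function.update_of_ne hxj] using this
  · rintro ⟨rfl, rfl, h⟩
    funext x
    rcases eq_or_ne x i with rfl | hxi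
    · simp [Function.update_of_ne hij]
    rcases eq_or_ne x j with rfl | hxj
    · simp [Function.update_of_ne hxi, Function.update_of_ne hij.symm]
    · simp [Function.update_of_ne hxi, Function.update_of_ne hxj, h x hxi hxj]

lemma sum_filter_bij {β γ : Type*} [Fintype β] [Fintype γ] [DecidableEq β]
    (e : γ → β) (he : Function.Injective e) (P : β → Prop) [DecidablePred P]
    (hP : ∀ y, P y ↔ ∃ q, y = e q) (f : β → ℂ) :
    (∑ y, if P y then f y else 0) = ∑ q, f (e q) := by
  rw [Finset.sum_ite, Finset.sum_const_zero, add_zero]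
  rw [← Finset.sum_image (fun x _ y _ h => he h)]
  apply Finset.sum_congr
  · ext y
    simp only [Finset.mem_filter, Finset.mem_univ, true_and, Finset.mem_image]
    rw [hP]
    constructor
    · rintro ⟨q, rfl⟩; exact ⟨q, rfl⟩
    · rintro ⟨q, h⟩; exact ⟨q, h.symm⟩
  · intros; rfl

lemma sum_ite_eq_ite {α : Type*} [Fintype α] [DecidableEq α] (u v : α) (f g : ℂ) :
    (∑ c, (if c = u then f else 0) * (if c = v then g else 0)) = if u = v then f * g else 0 := by
  rcases eq_or_ne u v with rfl | h
  · rw [if_pos rfl]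
    have : ∀ c : α, (if c = u then f else 0) * (if c = u then g else 0) = if c = u then f * g else 0 := by
      intro c; rcases eq_or_ne c u with rfl | hc
      · simp
      · simp [hc]
    simp_rw [this, Finset.sum_ite_eq' Finset.univ u (fun _ => f * g)]
    simp
  · rw [if_neg h]
    apply Finset.sum_eq_zero
    intro c _
    rcases eq_or_ne c u with rfl | hc
    · simp [h]
    · simp [hc]

section ZPart
variable {m k : ℕ} [NeZero m] [NeZero k]

lemma kernelZ_apply_succ (δ : Fin m × Fin k → Fin m × Fin k × Bool → ℂ)
    (p : Fin m) (i : ℤ) (T : TapeZ k) (x : Fin m × Fin k × Bool) :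
    QTMkernelZ m k δ (x.1, i + dirInt x.2.2, TapeZ.update T i x.2.1) (p, i, T)
      = δ (p, T.1 i) x := by
  unfold QTMkernelZ
  rw [Fintype.sum_eq_single x]
  · simp
  · intro y hy
    rw [if_neg]
    rintro ⟨h1, h2, h3⟩
    apply hy
    have e2 : x.2.2 = y.2.2 := dirInt_inj (add_left_cancel h2)
    have e3 : x.2.1 = y.2.1 :=
      Function.update_injective T.1 i (congrArg Subtype.val h3)
    exact Prod.ext h1.symm (Prod.ext e3.symm e2.symm)

lemma kernelZ_eq_zero {δ : Fin m × Fin k → Fin m × Fin k × Bool → ℂ} {c' c : ConfigZ m k}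
    (h : ∀ x : Fin m × Fin k × Bool,
      ¬(c'.1 = x.1 ∧ c'.2.1 = c.2.1 + dirInt x.2.2 ∧
        c'.2.2 = TapeZ.update c.2.2 c.2.1 x.2.1)) :
    QTMkernelZ m k δ c' c = 0 :=
  Finset.sum_eq_zero fun x _ => if_neg (h x)

lemma exists_of_kernelZ_ne_zero {δ : Fin m × Fin k → Fin m × Fin k × Bool → ℂ}
    {c' c : ConfigZ m k} (h : QTMkernelZ m k δ c' c ≠ 0) :
    ∃ x : Fin m × Fin k × Bool,
      c'.1 = x.1 ∧ c'.2.1 = c.2.1 + dirInt x.2.2 ∧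
        c'.2.2 = TapeZ.update c.2.2 c.2.1 x.2.1 := by
  by_contra hc
  push_neg at hc
  exact h (kernelZ_eq_zero fun x hx => (hc x hx.1 hx.2.1) hx.2.2)

noncomputable def blankZ (k : ℕ) [NeZero k] : TapeZ k :=
  ⟨fun _ => 0, by simp [Function.support]⟩

noncomputable def tape1 {k : ℕ} [NeZero k] (a : Fin k) : TapeZ k :=
  TapeZ.update (blankZ k) 0 a

lemma tape1_val0 (a : Fin k) : (tape1 a).1 0 = a := by
  show Function.update (blankZ k).1 0 a 0 = a
  exact Function.update_self _ _ _

lemma tape1_update (a b : Fin k) : TapeZ.update (tape1 a) 0 b = tape1 b :=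
  Subtype.ext (Function.update_idem _ _ _)

lemma tape1_inj : Function.Injective (tape1 (k := k)) := by
  intro a b h
  have := congrArg (fun T : TapeZ k => T.1 0) h
  simpa [tape1_val0] using this

noncomputable def tape2 {k : ℕ} [NeZero k] (u v : Fin k) : TapeZ k :=
  TapeZ.update (TapeZ.update (blankZ k) 2 v) 0 u

lemma tape2_val0 (u v : Fin k) : (tape2 u v).1 0 = u := by
  show Function.update (Function.update (blankZ k).1 2 v) 0 u 0 = u
  exact Function.update_self _ _ _

lemma tape2_val2 (u v : Fin k) : (tape2 u v).1 2 = v := by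
  show Function.update (Function.update (blankZ k).1 2 v) 0 u 2 = v
  rw [Function.update_of_ne (by norm_num), Function.update_self]

lemma tape2_update0 (u v w : Fin k) : TapeZ.update (tape2 u v) 0 w = tape2 w v :=
  Subtype.ext (Function.update_idem _ _ _)

lemma tape2_update2 (u v w : Fin k) : TapeZ.update (tape2 u v) 2 w = tape2 u w := by
  apply Subtype.ext
  show Function.update (Function.update (Function.update (blankZ k).1 2 v) 0 u) 2 w
      = Function.update (Function.update (blankZ k).1 2 w) 0 u
  rw [Function.update_comm (by norm_num : (0:ℤ) ≠ 2), Function.update_idem]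

lemma localA {δ : Fin m × Fin k → Fin m × Fin k × Bool → ℂ}
    (hδ : IsUnitaryKernel (QTMkernelZ m k δ)) (p₁ p₂ : Fin m) (a₁ a₂ : Fin k) :
    (∑ x : Fin m × Fin k × Bool, conj (δ (p₁, a₁) x) * δ (p₂, a₂) x)
      = if (p₁, a₁) = (p₂, a₂) then 1 else 0 := by
  have h := hδ.1 (p₁, 0, tape1 a₁) (p₂, 0, tape1 a₂)
  set ι : Fin m × Fin k × Bool → ConfigZ m k :=
    fun x => (x.1, (0:ℤ) + dirInt x.2.2, tape1 x.2.1) with hιdef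
  have hι : Function.Injective ι := by
    intro x y hxy
    have h1 : x.1 = y.1 := congrArg (fun c : ConfigZ m k => c.1) hxy
    have h2 : (0:ℤ) + dirInt x.2.2 = 0 + dirInt y.2.2 :=
      congrArg (fun c : ConfigZ m k => c.2.1) hxy
    have h3 : tape1 x.2.1 = tape1 y.2.1 := congrArg (fun c : ConfigZ m k => c.2.2) hxy
    exact Prod.ext h1 (Prod.ext (tape1_inj h3) (dirInt_inj (add_left_cancel h2)))
  have hsupp : ∀ c : ConfigZ m k, c ∉ Finset.image ι Finset.univ →
      conj (QTMkernelZ m k δ c (p₁, 0, tape1 a₁)) * QTMkernelZ m k δ c (p₂, 0, tape1 a₂) = 0 := by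
    intro c hc
    have hz : QTMkernelZ m k δ c (p₁, 0, tape1 a₁) = 0 := by
      apply kernelZ_eq_zero
      rintro x ⟨h1, h2, h3⟩
      apply hc
      rw [Finset.mem_image]
      refine ⟨x, Finset.mem_univ x, ?_⟩
      refine (Prod.ext h1 (Prod.ext h2 (h3.trans (tape1_update a₁ x.2.1)))).symm
    simp [hz]
  rw [tsum_eq_sum hsupp, Finset.sum_image (fun x _ y _ h' => hι h')] at h
  have e1 : ∀ x : Fin m × Fin k × Bool,
      QTMkernelZ m k δ (ι x) (p₁, 0, tape1 a₁) = δ (p₁, a₁) x := by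
    intro x
    have hx : ι x = ((x.1, (0:ℤ) + dirInt x.2.2, TapeZ.update (tape1 a₁) 0 x.2.1) : Fin m × ℤ × TapeZ k) := by
      simp [hιdef, tape1_update] <;> rfl
    rw [hιdef] at hx ⊢
    rw [hx, kernelZ_apply_succ, tape1_val0]
  have e2 : ∀ x : Fin m × Fin k × Bool,
      QTMkernelZ m k δ (ι x) (p₂, 0, tape1 a₂) = δ (p₂, a₂) x := by
    intro x
    have hx : ι x = ((x.1, (0:ℤ) + dirInt x.2.2, TapeZ.update (tape1 a₂) 0 x.2.1) : Fin m × ℤ × TapeZ k) := by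
      simp [hιdef, tape1_update] <;> rfl
    rw [hιdef] at hx ⊢
    rw [hx, kernelZ_apply_succ, tape1_val0]
  have key : (∑ x : Fin m × Fin k × Bool, conj (δ (p₁, a₁) x) * δ (p₂, a₂) x)
      = ∑ x : Fin m × Fin k × Bool,
          conj (QTMkernelZ m k δ (ι x) (p₁, 0, tape1 a₁)) * QTMkernelZ m k δ (ι x) (p₂, 0, tape1 a₂) :=
    (Finset.sum_congr rfl fun x _ => by rw [e1 x, e2 x]).symm
  refine (key.trans h).trans ?_
  by_cases hpq : (p₁, a₁) = (p₂, a₂)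
  · simp only [Prod.mk.injEq] at hpq
    rw [if_pos (by simp [hpq.1, hpq.2] <;> rfl), if_pos (by simp [hpq.1, hpq.2] <;> rfl)]
  · rw [if_neg, if_neg hpq]
    intro hc
    apply hpq
    have h1 : p₁ = p₂ := congrArg (fun c : ConfigZ m k => c.1) hc
    have h3 : tape1 a₁ = tape1 a₂ := congrArg (fun c : ConfigZ m k => c.2.2) hc
    rw [h1, tape1_inj h3]

end ZPart

section BPart
variable {m k : ℕ} [NeZero m] [NeZero k]

lemma tape2_inj {u v u' v' : Fin k} (h : tape2 u v = tape2 u' v') : u = u' ∧ v = v' := by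
  constructor
  · have := congrArg (fun T : TapeZ k => T.1 0) h
    simpa [tape2_val0] using this
  · have := congrArg (fun T : TapeZ k => T.1 2) h
    simpa [tape2_val2] using this

lemma localB {δ : Fin m × Fin k → Fin m × Fin k × Bool → ℂ}
    (hδ : IsUnitaryKernel (QTMkernelZ m k δ)) (p₁ p₂ : Fin m) (a₁ a₂ b₁ b₂ : Fin k) :
    (∑ q : Fin m, conj (δ (p₁, a₁) (q, b₁, true)) * δ (p₂, a₂) (q, b₂, false)) = 0 := by
  have h := hδ.1 (p₁, 0, tape2 a₁ b₂) (p₂, 2, tape2 b₁ a₂)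
  set j : Fin m → ConfigZ m k := fun q => (q, (1:ℤ), tape2 b₁ b₂) with hjdef
  have hj : Function.Injective j := by
    intro q q' hqq
    exact congrArg (fun c : ConfigZ m k => c.1) hqq
  have hsupp : ∀ c : ConfigZ m k, c ∉ Finset.image j Finset.univ →
      conj (QTMkernelZ m k δ c (p₁, 0, tape2 a₁ b₂)) * QTMkernelZ m k δ c (p₂, 2, tape2 b₁ a₂) = 0 := by
    intro c hc
    by_contra hne
    have h1 : QTMkernelZ m k δ c (p₁, 0, tape2 a₁ b₂) ≠ 0 := fun hz => hne (by simp [hz])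
    have h2 : QTMkernelZ m k δ c (p₂, 2, tape2 b₁ a₂) ≠ 0 := fun hz => hne (by simp [hz])
    obtain ⟨⟨q₁, bb₁, d₁⟩, e11, e12, e13⟩ := exists_of_kernelZ_ne_zero h1
    obtain ⟨⟨q₂, bb₂, d₂⟩, e21, e22, e23⟩ := exists_of_kernelZ_ne_zero h2
    simp only at e11 e12 e13 e21 e22 e23
    have hd : (0:ℤ) + dirInt d₁ = 2 + dirInt d₂ := e12.symm.trans e22
    have hd1 : d₁ = true ∧ d₂ = false := by
      cases d₁ <;> cases d₂ <;> simp [dirInt] at hd ⊢ <;> omega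
    obtain ⟨rfl, rfl⟩ := hd1
    have ht : tape2 bb₁ b₂ = tape2 b₁ bb₂ := by
      rw [← tape2_update0 a₁ b₂ bb₁, ← tape2_update2 b₁ a₂ bb₂]
      exact e13.symm.trans e23
    obtain ⟨hb1, hb2⟩ := tape2_inj ht
    apply hc
    rw [Finset.mem_image]
    refine ⟨q₁, Finset.mem_univ q₁, ?_⟩
    rw [hjdef]
    refine (Prod.ext e11 (Prod.ext ?_ ?_)).symm
    · rw [e12]; simp [dirInt]
    · rw [e13, hb1, tape2_update0]
  rw [tsum_eq_sum hsupp, Finset.sum_image (fun x _ y _ h' => hj h')] at h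
  have e1 : ∀ q : Fin m,
      QTMkernelZ m k δ (j q) (p₁, 0, tape2 a₁ b₂) = δ (p₁, a₁) (q, b₁, true) := by
    intro q
    have hx := kernelZ_apply_succ δ p₁ 0 (tape2 a₁ b₂) (q, b₁, true)
    simp only [dirInt, zero_add, if_true, tape2_update0, tape2_val0] at hx
    rw [hjdef]
    convert hx using 3
  have e2 : ∀ q : Fin m,
      QTMkernelZ m k δ (j q) (p₂, 2, tape2 b₁ a₂) = δ (p₂, a₂) (q, b₂, false) := by
    intro q
    have hx := kernelZ_apply_succ δ p₂ 2 (tape2 b₁ a₂) (q, b₂, false)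
    simp only [dirInt, zero_add, Bool.false_eq_true, if_false, tape2_update2, tape2_val2] at hx
    rw [hjdef]
    convert hx using 3 <;> norm_num
  have key : (∑ q : Fin m, conj (δ (p₁, a₁) (q, b₁, true)) * δ (p₂, a₂) (q, b₂, false))
      = ∑ q : Fin m, conj (QTMkernelZ m k δ (j q) (p₁, 0, tape2 a₁ b₂))
          * QTMkernelZ m k δ (j q) (p₂, 2, tape2 b₁ a₂) :=
    (Finset.sum_congr rfl fun q _ => by rw [e1 q, e2 q]).symm
  refine (key.trans h).trans ?_
  rw [if_neg]
  intro hc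
  have := congrArg (fun c : ConfigZ m k => c.2.1) hc
  simp at this

lemma localB' {δ : Fin m × Fin k → Fin m × Fin k × Bool → ℂ}
    (hδ : IsUnitaryKernel (QTMkernelZ m k δ)) (p₁ p₂ : Fin m) (a₁ a₂ b₁ b₂ : Fin k) :
    (∑ q : Fin m, conj (δ (p₁, a₁) (q, b₁, false)) * δ (p₂, a₂) (q, b₂, true)) = 0 := by
  have h := localB hδ p₂ p₁ a₂ a₁ b₂ b₁
  have : (∑ q : Fin m, conj (δ (p₁, a₁) (q, b₁, false)) * δ (p₂, a₂) (q, b₂, true))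
      = conj (∑ q : Fin m, conj (δ (p₂, a₂) (q, b₂, true)) * δ (p₁, a₁) (q, b₁, false)) := by
    rw [map_sum]
    apply Finset.sum_congr rfl
    intro q _
    rw [map_mul, RingHomInvPair.comp_apply_eq₂]
    ring
  rw [this, h, map_zero]

end BPart

section NPart
variable {m k N : ℕ} [NeZero m] [NeZero k] [NeZero N]

lemma kernelN_apply (δ : Fin m × Fin k → Fin m × Fin k × Bool → ℂ)
    (c : ConfigN m k N) (p : Fin m) (i : ZMod N) (T : ZMod N → Fin k) :
    QTMkernelN m k N δ c (p, i, T)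
      = ∑ x : Fin m × Fin k × Bool,
          if c = ((x.1, i + (dirInt x.2.2 : ZMod N), Function.update T i x.2.1) : ConfigN m k N)
          then δ (p, T i) x else 0 := by
  unfold QTMkernelN
  rw [Matrix.of_apply]
  apply Finset.sum_congr rfl
  intro x _
  apply if_congr _ rfl rfl
  constructor
  · rintro ⟨h1, h2, h3⟩; exact Prod.ext h1 (Prod.ext h2 h3)
  · rintro rfl; exact ⟨rfl, rfl, rfl⟩

lemma entryN (δ : Fin m × Fin k → Fin m × Fin k × Bool → ℂ)
    (p₁ p₂ : Fin m) (i₁ i₂ : ZMod N) (T₁ T₂ : ZMod N → Fin k) :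
    (star (QTMkernelN m k N δ) * QTMkernelN m k N δ) (p₁, i₁, T₁) (p₂, i₂, T₂)
      = ∑ x₁ : Fin m × Fin k × Bool, ∑ x₂ : Fin m × Fin k × Bool,
          if ((x₁.1, i₁ + (dirInt x₁.2.2 : ZMod N), Function.update T₁ i₁ x₁.2.1) : ConfigN m k N)
              = (x₂.1, i₂ + (dirInt x₂.2.2 : ZMod N), Function.update T₂ i₂ x₂.2.1)
          then conj (δ (p₁, T₁ i₁) x₁) * δ (p₂, T₂ i₂) x₂ else 0 := by
  rw [Matrix.mul_apply]
  have step : ∀ c : ConfigN m k N,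
      (star (QTMkernelN m k N δ)) (p₁, i₁, T₁) c * (QTMkernelN m k N δ) c (p₂, i₂, T₂)
      = ∑ x₁ : Fin m × Fin k × Bool, ∑ x₂ : Fin m × Fin k × Bool,
          (if c = ((x₁.1, i₁ + (dirInt x₁.2.2 : ZMod N), Function.update T₁ i₁ x₁.2.1) : ConfigN m k N)
            then conj (δ (p₁, T₁ i₁) x₁) else 0)
          * (if c = ((x₂.1, i₂ + (dirInt x₂.2.2 : ZMod N), Function.update T₂ i₂ x₂.2.1) : ConfigN m k N)
            then δ (p₂, T₂ i₂) x₂ else 0) := by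
    intro c
    rw [Matrix.star_apply, kernelN_apply δ c p₁ i₁ T₁, kernelN_apply δ c p₂ i₂ T₂,
      ← starRingEnd_apply, map_sum, Finset.sum_mul_sum]
    apply Finset.sum_congr rfl
    intro x₁ _
    apply Finset.sum_congr rfl
    intro x₂ _
    rw [apply_ite (starRingEnd ℂ), map_zero]
  calc (∑ c : ConfigN m k N, (star (QTMkernelN m k N δ)) (p₁, i₁, T₁) c
          * (QTMkernelN m k N δ) c (p₂, i₂, T₂))
      = ∑ c : ConfigN m k N, ∑ x₁ : Fin m × Fin k × Bool, ∑ x₂ : Fin m × Fin k × Bool,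
          (if c = ((x₁.1, i₁ + (dirInt x₁.2.2 : ZMod N), Function.update T₁ i₁ x₁.2.1) : ConfigN m k N)
            then conj (δ (p₁, T₁ i₁) x₁) else 0)
          * (if c = ((x₂.1, i₂ + (dirInt x₂.2.2 : ZMod N), Function.update T₂ i₂ x₂.2.1) : ConfigN m k N)
            then δ (p₂, T₂ i₂) x₂ else 0) := Finset.sum_congr rfl fun c _ => step c
    _ = ∑ x₁ : Fin m × Fin k × Bool, ∑ c : ConfigN m k N, ∑ x₂ : Fin m × Fin k × Bool, _ :=
        Finset.sum_comm
    _ = ∑ x₁ : Fin m × Fin k × Bool, ∑ x₂ : Fin m × Fin k × Bool, ∑ c : ConfigN m k N, _ :=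
        Finset.sum_congr rfl fun x₁ _ => Finset.sum_comm
    _ = _ := Finset.sum_congr rfl fun x₁ _ => Finset.sum_congr rfl fun x₂ _ =>
        sum_ite_eq_ite _ _ _ _

lemma zmod_two_ne (hN : 5 ≤ N) : (2 : ZMod N) ≠ 0 := by
  have : ((2 : ℕ) : ZMod N) ≠ 0 := by
    rw [Ne, ZMod.natCast_eq_zero_iff]
    intro h
    have := Nat.le_of_dvd (by norm_num) h
    omega
  simpa using this

lemma zmod_four_ne (hN : 5 ≤ N) : (4 : ZMod N) ≠ 0 := by
  have : ((4 : ℕ) : ZMod N) ≠ 0 := by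
    rw [Ne, ZMod.natCast_eq_zero_iff]
    intro h
    have := Nat.le_of_dvd (by norm_num) h
    omega
  simpa using this

lemma head_cases (hN : 5 ≤ N) (i₁ i₂ : ZMod N) (d₁ d₂ : Bool)
    (h : i₁ + ((dirInt d₁ : ℤ) : ZMod N) = i₂ + ((dirInt d₂ : ℤ) : ZMod N)) :
    (i₂ = i₁ ∧ d₁ = d₂) ∨ (i₂ = i₁ + 2 ∧ d₁ = true ∧ d₂ = false)
      ∨ (i₂ = i₁ - 2 ∧ d₁ = false ∧ d₂ = true) := by
  cases d₁ <;> cases d₂ <;> simp only [dirInt, if_true, if_false, Int.cast_one,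
    Int.cast_neg, Bool.false_eq_true, Bool.true_eq_false] at h ⊢
  · exact Or.inl ⟨by linear_combination -h, trivial⟩
  · exact Or.inr (Or.inr ⟨by linear_combination -h, trivial, trivial⟩)
  · exact Or.inr (Or.inl ⟨by linear_combination -h, trivial, trivial⟩)
  · exact Or.inl ⟨by linear_combination -h, trivial⟩

end NPart

lemma sum_snd_eq {γ₁ γ₂ : Type*} [Fintype γ₁] [Fintype γ₂] [DecidableEq γ₂]
    (z0 : γ₂) (f : γ₁ × γ₂ → ℂ) :
    (∑ x : γ₁ × γ₂, if x.2 = z0 then f x else 0) = ∑ a : γ₁, f (a, z0) := by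
  rw [Fintype.sum_prod_type]
  apply Finset.sum_congr rfl
  intro a _
  calc (∑ y : γ₂, if (a, y).2 = z0 then f (a, y) else 0)
      = ∑ y : γ₂, if y = z0 then f (a, y) else 0 := rfl
    _ = f (a, z0) := by
        rw [Finset.sum_ite_eq' Finset.univ z0 (fun z => f (a, z))]
        simp


/-- If the evolution operator `U_δ` of a quantum Turing machine is unitary, then for every
`N ≥ 5` the looped evolution operator `U_{δ,N}` is unitary. -/
theorem statement11 {m k : ℕ} [NeZero m] [NeZero k]
    (δ : Fin m × Fin k → Fin m × Fin k × Bool → ℂ)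
    (hδ : IsUnitaryKernel (QTMkernelZ m k δ))
    (N : ℕ) [NeZero N] (hN : 5 ≤ N) :
    QTMkernelN m k N δ ∈ Matrix.unitaryGroup (ConfigN m k N) ℂ := by
  have h2 : (2 : ZMod N) ≠ 0 := zmod_two_ne hN
  have h4 : (4 : ZMod N) ≠ 0 := zmod_four_ne hN
  rw [Matrix.mem_unitaryGroup_iff']
  apply Matrix.ext
  rintro ⟨p₁, i₁, T₁⟩ ⟨p₂, i₂, T₂⟩
  rw [entryN, Matrix.one_apply]
  by_cases h0 : i₂ = i₁
  · subst h0
    by_cases hT : ∀ x, x ≠ i₂ → T₁ x = T₂ x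
    · have inner : ∀ x₁ : Fin m × Fin k × Bool,
          (∑ x₂ : Fin m × Fin k × Bool,
            if ((x₁.1, i₂ + (dirInt x₁.2.2 : ZMod N), Function.update T₁ i₂ x₁.2.1) : ConfigN m k N)
                = (x₂.1, i₂ + (dirInt x₂.2.2 : ZMod N), Function.update T₂ i₂ x₂.2.1)
            then conj (δ (p₁, T₁ i₂) x₁) * δ (p₂, T₂ i₂) x₂ else 0)
          = conj (δ (p₁, T₁ i₂) x₁) * δ (p₂, T₂ i₂) x₁ := by
        intro x₁
        have hcond : ∀ x₂ : Fin m × Fin k × Bool,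
            (((x₁.1, i₂ + (dirInt x₁.2.2 : ZMod N), Function.update T₁ i₂ x₁.2.1) : ConfigN m k N)
                = (x₂.1, i₂ + (dirInt x₂.2.2 : ZMod N), Function.update T₂ i₂ x₂.2.1))
              ↔ x₂ = x₁ := by
          intro x₂
          constructor
          · intro h
            simp only [Prod.mk.injEq] at h
            obtain ⟨e1, e2, e3⟩ := h
            have ed : x₂.2.2 = x₁.2.2 := by
              rcases head_cases hN i₂ i₂ x₁.2.2 x₂.2.2 e2 with ⟨_, hd⟩ | ⟨ha, _, _⟩ | ⟨ha, _, _⟩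
              · exact hd.symm
              · exact absurd (by linear_combination -ha) h2
              · exact absurd (by linear_combination ha) h2
            have eb := ((update_eq_update_iff_same T₁ T₂ i₂ _ _).1 e3).1
            exact Prod.ext e1.symm (Prod.ext eb.symm ed)
          · rintro rfl
            exact Prod.ext rfl (Prod.ext rfl
              ((update_eq_update_iff_same T₁ T₂ i₂ _ _).2 ⟨rfl, hT⟩))
        calc (∑ x₂ : Fin m × Fin k × Bool,
            if ((x₁.1, i₂ + (dirInt x₁.2.2 : ZMod N), Function.update T₁ i₂ x₁.2.1) : ConfigN m k N)
                = (x₂.1, i₂ + (dirInt x₂.2.2 : ZMod N), Function.update T₂ i₂ x₂.2.1)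
            then conj (δ (p₁, T₁ i₂) x₁) * δ (p₂, T₂ i₂) x₂ else 0)
            = ∑ x₂ : Fin m × Fin k × Bool,
                if x₂ = x₁ then conj (δ (p₁, T₁ i₂) x₁) * δ (p₂, T₂ i₂) x₂ else 0 :=
              Finset.sum_congr rfl fun x₂ _ => if_congr (hcond x₂) rfl rfl
          _ = _ := by
              rw [Finset.sum_ite_eq' Finset.univ x₁
                (fun x₂ => conj (δ (p₁, T₁ i₂) x₁) * δ (p₂, T₂ i₂) x₂)]
              simp
      rw [Finset.sum_congr rfl fun x₁ _ => inner x₁, localA hδ p₁ p₂ (T₁ i₂) (T₂ i₂)]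
      by_cases hpq : (p₁, T₁ i₂) = (p₂, T₂ i₂)
      · simp only [Prod.mk.injEq] at hpq
        have hTT : T₁ = T₂ := funext fun x => by
          rcases eq_or_ne x i₂ with rfl | hx
          · exact hpq.2
          · exact hT x hx
        simp [hpq.1, hTT]
      · rw [if_neg hpq, if_neg]
        intro hc
        apply hpq
        simp only [Prod.mk.injEq] at hc
        rw [hc.1, hc.2.2]
    · push_neg at hT
      obtain ⟨x0, hx0, hne⟩ := hT
      trans (0 : ℂ)
      · apply Finset.sum_eq_zero
        intro x₁ _
        apply Finset.sum_eq_zero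
        intro x₂ _
        rw [if_neg]
        intro hcc
        simp only [Prod.mk.injEq] at hcc
        exact hne (((update_eq_update_iff_same T₁ T₂ i₂ _ _).1 hcc.2.2).2 x0 hx0)
      · refine (if_neg ?_).symm
        intro hc
        simp only [Prod.mk.injEq] at hc
        exact hne (congrFun hc.2.2 x0)
  · by_cases hp2 : i₂ = i₁ + 2
    · subst hp2
      have hne12 : i₁ ≠ i₁ + 2 := fun hc => h2 (by linear_combination -hc)
      trans (0 : ℂ)
      · by_cases hT : ∀ x, x ≠ i₁ → x ≠ i₁ + 2 → T₁ x = T₂ x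
        · have inner : ∀ x₁ : Fin m × Fin k × Bool,
              (∑ x₂ : Fin m × Fin k × Bool,
                if ((x₁.1, i₁ + (dirInt x₁.2.2 : ZMod N), Function.update T₁ i₁ x₁.2.1) : ConfigN m k N)
                    = (x₂.1, i₁ + 2 + (dirInt x₂.2.2 : ZMod N), Function.update T₂ (i₁ + 2) x₂.2.1)
                then conj (δ (p₁, T₁ i₁) x₁) * δ (p₂, T₂ (i₁ + 2)) x₂ else 0)
              = if x₁.2 = ((T₂ i₁, true) : Fin k × Bool)
                  then conj (δ (p₁, T₁ i₁) x₁) * δ (p₂, T₂ (i₁ + 2)) (x₁.1, T₁ (i₁ + 2), false)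
                  else 0 := by
            intro x₁
            by_cases hres : x₁.2 = ((T₂ i₁, true) : Fin k × Bool)
            · rw [if_pos hres]
              have hcond : ∀ x₂ : Fin m × Fin k × Bool,
                  (((x₁.1, i₁ + (dirInt x₁.2.2 : ZMod N), Function.update T₁ i₁ x₁.2.1) : ConfigN m k N)
                      = (x₂.1, i₁ + 2 + (dirInt x₂.2.2 : ZMod N), Function.update T₂ (i₁ + 2) x₂.2.1))
                    ↔ x₂ = (x₁.1, T₁ (i₁ + 2), false) := by
                intro x₂
                constructor
                · intro h
                  simp only [Prod.mk.injEq] at h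
                  obtain ⟨e1, e2, e3⟩ := h
                  have hd2 : x₂.2.2 = false := by
                    rcases head_cases hN i₁ (i₁ + 2) x₁.2.2 x₂.2.2 e2 with
                      ⟨ha, _⟩ | ⟨_, _, hb⟩ | ⟨ha, _, _⟩
                    · exact absurd ha.symm hne12
                    · exact hb
                    · exact absurd (by linear_combination ha) h4
                  have hu := (update_eq_update_iff_ne T₁ T₂ hne12 x₁.2.1 x₂.2.1).1 e3
                  exact Prod.ext e1.symm (Prod.ext hu.2.1 hd2)
                · rintro rfl
                  refine Prod.ext rfl (Prod.ext ?_ ?_)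
                  · show i₁ + ((dirInt x₁.2.2 : ℤ) : ZMod N) = i₁ + 2 + ((dirInt false : ℤ) : ZMod N)
                    rw [show x₁.2.2 = true from congrArg Prod.snd hres]
                    show i₁ + ((1 : ℤ) : ZMod N) = i₁ + 2 + ((-1 : ℤ) : ZMod N)
                    push_cast
                    ring
                  · exact (update_eq_update_iff_ne T₁ T₂ hne12 _ _).2
                      ⟨congrArg Prod.fst hres, rfl, hT⟩
              calc (∑ x₂ : Fin m × Fin k × Bool,
                  if ((x₁.1, i₁ + (dirInt x₁.2.2 : ZMod N), Function.update T₁ i₁ x₁.2.1) : ConfigN m k N)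
                      = (x₂.1, i₁ + 2 + (dirInt x₂.2.2 : ZMod N), Function.update T₂ (i₁ + 2) x₂.2.1)
                  then conj (δ (p₁, T₁ i₁) x₁) * δ (p₂, T₂ (i₁ + 2)) x₂ else 0)
                  = ∑ x₂ : Fin m × Fin k × Bool,
                      if x₂ = (x₁.1, T₁ (i₁ + 2), false)
                      then conj (δ (p₁, T₁ i₁) x₁) * δ (p₂, T₂ (i₁ + 2)) x₂ else 0 :=
                    Finset.sum_congr rfl fun x₂ _ => if_congr (hcond x₂) rfl rfl
                _ = _ := by
                    rw [Finset.sum_ite_eq' Finset.univ ((x₁.1, T₁ (i₁ + 2), false) : Fin m × Fin k × Bool)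
                      (fun x₂ => conj (δ (p₁, T₁ i₁) x₁) * δ (p₂, T₂ (i₁ + 2)) x₂)]
                    simp
            · rw [if_neg hres]
              apply Finset.sum_eq_zero
              intro x₂ _
              rw [if_neg]
              intro h
              apply hres
              simp only [Prod.mk.injEq] at h
              obtain ⟨e1, e2, e3⟩ := h
              have hd1 : x₁.2.2 = true := by
                rcases head_cases hN i₁ (i₁ + 2) x₁.2.2 x₂.2.2 e2 with
                  ⟨ha, _⟩ | ⟨_, hb, _⟩ | ⟨ha, _, _⟩
                · exact absurd ha.symm hne12
                · exact hb
                · exact absurd (by linear_combination ha) h4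
              have hu := (update_eq_update_iff_ne T₁ T₂ hne12 x₁.2.1 x₂.2.1).1 e3
              exact Prod.ext hu.1 hd1
          rw [Finset.sum_congr rfl fun x₁ _ => inner x₁,
            sum_snd_eq ((T₂ i₁, true) : Fin k × Bool)
              (fun x₁ => conj (δ (p₁, T₁ i₁) x₁) * δ (p₂, T₂ (i₁ + 2)) (x₁.1, T₁ (i₁ + 2), false))]
          exact localB hδ p₁ p₂ (T₁ i₁) (T₂ (i₁ + 2)) (T₂ i₁) (T₁ (i₁ + 2))
        · push_neg at hT
          obtain ⟨x0, hx1, hx2, hne⟩ := hT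
          apply Finset.sum_eq_zero
          intro x₁ _
          apply Finset.sum_eq_zero
          intro x₂ _
          rw [if_neg]
          intro h
          simp only [Prod.mk.injEq] at h
          exact hne (((update_eq_update_iff_ne T₁ T₂ hne12 x₁.2.1 x₂.2.1).1 h.2.2).2.2 x0 hx1 hx2)
      · refine (if_neg ?_).symm
        intro hc
        have := congrArg (fun c : ConfigN m k N => c.2.1) hc
        exact hne12 this
    · by_cases hm2 : i₂ = i₁ - 2
      · subst hm2
        have hne12 : i₁ ≠ i₁ - 2 := fun hc => h2 (by linear_combination hc)
        trans (0 : ℂ)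
        · by_cases hT : ∀ x, x ≠ i₁ → x ≠ i₁ - 2 → T₁ x = T₂ x
          · have inner : ∀ x₁ : Fin m × Fin k × Bool,
                (∑ x₂ : Fin m × Fin k × Bool,
                  if ((x₁.1, i₁ + (dirInt x₁.2.2 : ZMod N), Function.update T₁ i₁ x₁.2.1) : ConfigN m k N)
                      = (x₂.1, i₁ - 2 + (dirInt x₂.2.2 : ZMod N), Function.update T₂ (i₁ - 2) x₂.2.1)
                  then conj (δ (p₁, T₁ i₁) x₁) * δ (p₂, T₂ (i₁ - 2)) x₂ else 0)
                = if x₁.2 = ((T₂ i₁, false) : Fin k × Bool)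
                    then conj (δ (p₁, T₁ i₁) x₁) * δ (p₂, T₂ (i₁ - 2)) (x₁.1, T₁ (i₁ - 2), true)
                    else 0 := by
              intro x₁
              by_cases hres : x₁.2 = ((T₂ i₁, false) : Fin k × Bool)
              · rw [if_pos hres]
                have hcond : ∀ x₂ : Fin m × Fin k × Bool,
                    (((x₁.1, i₁ + (dirInt x₁.2.2 : ZMod N), Function.update T₁ i₁ x₁.2.1) : ConfigN m k N)
                        = (x₂.1, i₁ - 2 + (dirInt x₂.2.2 : ZMod N), Function.update T₂ (i₁ - 2) x₂.2.1))
                      ↔ x₂ = (x₁.1, T₁ (i₁ - 2), true) := by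
                  intro x₂
                  constructor
                  · intro h
                    simp only [Prod.mk.injEq] at h
                    obtain ⟨e1, e2, e3⟩ := h
                    have hd2 : x₂.2.2 = true := by
                      rcases head_cases hN i₁ (i₁ - 2) x₁.2.2 x₂.2.2 e2 with
                        ⟨ha, _⟩ | ⟨ha, _, _⟩ | ⟨_, _, hb⟩
                      · exact absurd ha.symm hne12
                      · exact absurd (by linear_combination -ha) h4
                      · exact hb
                    have hu := (update_eq_update_iff_ne T₁ T₂ hne12 x₁.2.1 x₂.2.1).1 e3
                    exact Prod.ext e1.symm (Prod.ext hu.2.1 hd2)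
                  · rintro rfl
                    refine Prod.ext rfl (Prod.ext ?_ ?_)
                    · show i₁ + ((dirInt x₁.2.2 : ℤ) : ZMod N) = i₁ - 2 + ((dirInt true : ℤ) : ZMod N)
                      rw [show x₁.2.2 = false from congrArg Prod.snd hres]
                      show i₁ + ((-1 : ℤ) : ZMod N) = i₁ - 2 + ((1 : ℤ) : ZMod N)
                      push_cast
                      ring
                    · exact (update_eq_update_iff_ne T₁ T₂ hne12 _ _).2
                        ⟨congrArg Prod.fst hres, rfl, hT⟩
                calc (∑ x₂ : Fin m × Fin k × Bool,
                    if ((x₁.1, i₁ + (dirInt x₁.2.2 : ZMod N), Function.update T₁ i₁ x₁.2.1) : ConfigN m k N)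
                        = (x₂.1, i₁ - 2 + (dirInt x₂.2.2 : ZMod N), Function.update T₂ (i₁ - 2) x₂.2.1)
                    then conj (δ (p₁, T₁ i₁) x₁) * δ (p₂, T₂ (i₁ - 2)) x₂ else 0)
                    = ∑ x₂ : Fin m × Fin k × Bool,
                        if x₂ = (x₁.1, T₁ (i₁ - 2), true)
                        then conj (δ (p₁, T₁ i₁) x₁) * δ (p₂, T₂ (i₁ - 2)) x₂ else 0 :=
                      Finset.sum_congr rfl fun x₂ _ => if_congr (hcond x₂) rfl rfl
                  _ = _ := by
                      rw [Finset.sum_ite_eq' Finset.univ ((x₁.1, T₁ (i₁ - 2), true) : Fin m × Fin k × Bool)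
                        (fun x₂ => conj (δ (p₁, T₁ i₁) x₁) * δ (p₂, T₂ (i₁ - 2)) x₂)]
                      simp
              · rw [if_neg hres]
                apply Finset.sum_eq_zero
                intro x₂ _
                rw [if_neg]
                intro h
                apply hres
                simp only [Prod.mk.injEq] at h
                obtain ⟨e1, e2, e3⟩ := h
                have hd1 : x₁.2.2 = false := by
                  rcases head_cases hN i₁ (i₁ - 2) x₁.2.2 x₂.2.2 e2 with
                    ⟨ha, _⟩ | ⟨ha, _, _⟩ | ⟨_, hb, _⟩
                  · exact absurd ha.symm hne12
                  · exact absurd (by linear_combination -ha) h4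
                  · exact hb
                have hu := (update_eq_update_iff_ne T₁ T₂ hne12 x₁.2.1 x₂.2.1).1 e3
                exact Prod.ext hu.1 hd1
            rw [Finset.sum_congr rfl fun x₁ _ => inner x₁,
              sum_snd_eq ((T₂ i₁, false) : Fin k × Bool)
                (fun x₁ => conj (δ (p₁, T₁ i₁) x₁) * δ (p₂, T₂ (i₁ - 2)) (x₁.1, T₁ (i₁ - 2), true))]
            exact localB' hδ p₁ p₂ (T₁ i₁) (T₂ (i₁ - 2)) (T₂ i₁) (T₁ (i₁ - 2))
          · push_neg at hT
            obtain ⟨x0, hx1, hx2, hne⟩ := hT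
            apply Finset.sum_eq_zero
            intro x₁ _
            apply Finset.sum_eq_zero
            intro x₂ _
            rw [if_neg]
            intro h
            simp only [Prod.mk.injEq] at h
            exact hne (((update_eq_update_iff_ne T₁ T₂ hne12 x₁.2.1 x₂.2.1).1 h.2.2).2.2 x0 hx1 hx2)
        · refine (if_neg ?_).symm
          intro hc
          have := congrArg (fun c : ConfigN m k N => c.2.1) hc
          exact hne12 this
      · trans (0 : ℂ)
        · apply Finset.sum_eq_zero
          intro x₁ _
          apply Finset.sum_eq_zero
          intro x₂ _
          rw [if_neg]
          intro h
          simp only [Prod.mk.injEq] at h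
          rcases head_cases hN i₁ i₂ x₁.2.2 x₂.2.2 h.2.1 with ⟨ha, _⟩ | ⟨ha, _, _⟩ | ⟨ha, _, _⟩
          · exact h0 ha
          · exact hp2 ha
          · exact hm2 ha
        · refine (if_neg ?_).symm
          intro hc
          exact h0 (congrArg (fun c : ConfigN m k N => c.2.1) hc).symm
end

section
/- Fix positive integers m, k, an integer N ≥ 5, and a transition function δ : Q×Γ → ℂ^{Q×Γ×{−1,+1}} of a quantum Turing machine with state set Q = {1,…,m} and tape alphabet Γ = {0,…,k−1}. Then A*(F_0F_1⋯F_{N−1})A = 0; equivalently, the operator F_0F_1⋯F_{N−1} maps im(A) into the orthogonal complement of im(A). -/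
open Matrix
open scoped Classical

/-- The index set `{-m, …, m}` of the standard basis of the space `𝒮 = ℂ^{2m+1}` attached
to each tape square. -/
abbrev Slot (m : ℕ) : Type := {s : ℤ // s ∈ Finset.Icc (-(m : ℤ)) (m : ℤ)}

/-- The slot value `0`, indicating the absence of the tape head. -/
def slotZero (m : ℕ) : Slot m := ⟨0, by simp only [Finset.mem_Icc]; omega⟩

/-- The negation map `s ↦ -s` on `{-m, …, m}`. -/
def slotNeg {m : ℕ} (s : Slot m) : Slot m :=
  ⟨-s.1, by have := s.2; simp only [Finset.mem_Icc] at *; omega⟩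

/-- The slot value recording the (active) state `p`; the state `p : Fin m` is identified
with the value `p + 1 ∈ {1, …, m}`. -/
def slotState {m : ℕ} (p : Fin m) : Slot m :=
  ⟨(p : ℤ) + 1, by have := p.isLt; simp only [Finset.mem_Icc]; omega⟩

/-- The index set of the standard basis of `𝒦_N = ⊗_{i ∈ ℤ_N} (𝒮_i ⊗ 𝒯_i)`. -/
abbrev KIdx (m k N : ℕ) : Type := ZMod N → Slot m × Fin k

/-- The standard basis vector `f(p,i,T)` of `𝒦_N` associated to a configuration:
`𝒮_i` holds `p`, `𝒮_j` holds `0` for `j ≠ i`, and `𝒯_j` holds `T(j)`. -/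
def fConf {m k N : ℕ} (c : ConfigN m k N) : KIdx m k N :=
  fun j => (if j = c.2.1 then slotState c.1 else slotZero m, c.2.2 j)

/-- The isometry `A = Σ_{(p,i,T)} |f(p,i,T)⟩⟨p,i,T|` from `ℋ_N` to `𝒦_N`, as a matrix. -/
noncomputable def Amat (m k N : ℕ) : Matrix (KIdx m k N) (ConfigN m k N) ℂ :=
  Matrix.of fun b c => if b = fConf c then 1 else 0

/-- The unitary `F_i` on `𝒦_N` applying `F : |s⟩ ↦ |-s⟩` to the factor `𝒮_i` and the
identity to all other factors, as a matrix. -/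
noncomputable def Fmat (m k N : ℕ) [NeZero N] (i : ZMod N) :
    Matrix (KIdx m k N) (KIdx m k N) ℂ :=
  Matrix.of fun b b' =>
    if b = Function.update b' i (slotNeg (b' i).1, (b' i).2) then 1 else 0

/-- The product `F_0 F_1 ⋯ F_{N-1}`, which applies `F : |s⟩ ↦ |-s⟩` independently to every
factor `𝒮_0, …, 𝒮_{N-1}` of `𝒦_N`. -/
noncomputable def FallMat (m k N : ℕ) : Matrix (KIdx m k N) (KIdx m k N) ℂ :=
  Matrix.of fun b b' =>
    if b = (fun j => (slotNeg (b' j).1, (b' j).2)) then 1 else 0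

/-- The unitary `V = A U_{δ,N} A* + (1 - A A*)` on `𝒦_N`. -/
noncomputable def Vmat (m k N : ℕ) [NeZero N]
    (δ : Fin m × Fin k → Fin m × Fin k × Bool → ℂ) :
    Matrix (KIdx m k N) (KIdx m k N) ℂ :=
  Amat m k N * QTMkernelN m k N δ * (Amat m k N)ᴴ +
    (1 - Amat m k N * (Amat m k N)ᴴ)

/-- The orthogonal projection `Π` of `𝒦_N` onto the span of the standard basis vectors in
which exactly one of the factors `𝒮_0, …, 𝒮_{N-1}` holds a nonzero value. -/
noncomputable def PiMat (m k N : ℕ) [NeZero N] : Matrix (KIdx m k N) (KIdx m k N) ℂ :=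
  Matrix.of fun b b' =>
    if b = b' ∧ (Finset.univ.filter fun j : ZMod N => (b j).1 ≠ slotZero m).card = 1
    then 1 else 0

/-- The partial trace of an operator on `𝒦_N` down to the tensor factors `𝒮_j ⊗ 𝒯_j` with
`j ∈ S`, tracing out all factors with `j ∉ S`. -/
noncomputable def reduceTo {m k N : ℕ} [NeZero N] (S : Finset (ZMod N))
    (M : Matrix (KIdx m k N) (KIdx m k N) ℂ) :
    Matrix ({j : ZMod N // j ∈ S} → Slot m × Fin k)
      ({j : ZMod N // j ∈ S} → Slot m × Fin k) ℂ :=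
  Matrix.of fun g g' => ∑ h : {j : ZMod N // j ∉ S} → Slot m × Fin k,
    M (fun j => if hj : j ∈ S then g ⟨j, hj⟩ else h ⟨j, hj⟩)
      (fun j => if hj : j ∈ S then g' ⟨j, hj⟩ else h ⟨j, hj⟩)

/-- `A* (F_0 F_1 ⋯ F_{N-1}) A = 0`: the operator `F_0 ⋯ F_{N-1}` maps the image of the
isometry `A` into its orthogonal complement. -/
theorem statement12 {m k : ℕ} [NeZero m] [NeZero k] {N : ℕ} [NeZero N] (hN : 5 ≤ N)
    (δ : Fin m × Fin k → Fin m × Fin k × Bool → ℂ) :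
    (Amat m k N)ᴴ * FallMat m k N * Amat m k N = 0 := by
  ext c' c
  simp only [Matrix.mul_apply, Matrix.zero_apply, Amat, FallMat,
    Matrix.conjTranspose_apply, Matrix.of_apply,
    ite_mul, one_mul, zero_mul, mul_ite, mul_one, mul_zero]
  rw [Finset.sum_eq_single (fConf c)]
  · rw [if_pos rfl, Finset.sum_eq_single (fun j => (slotNeg ((fConf c) j).1, ((fConf c) j).2))]
    · rw [if_pos rfl, if_neg]
      · simp
      · intro h
        have := congrArg (fun g => ((g c.2.1).1 : Slot m).1) h
        simp only [fConf, slotNeg, slotState, slotZero, if_pos rfl] at this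
        split_ifs at this <;> simp only [Subtype.mk.injEq] at this <;> omega
    · intro b _ hb; rw [if_neg hb]
    · simp
  · intro b' _ hb'; rw [if_neg hb']
  · simp
end

section
/- Fix positive integers m, k, an integer N ≥ 5, and a transition function δ : Q×Γ → ℂ^{Q×Γ×{−1,+1}} of a quantum Turing machine with state set Q = {1,…,m} and tape alphabet Γ = {0,…,k−1}, and assume the looped evolution operator U_{δ,N} on ℋ_N is unitary. Define V = A U_{δ,N} A* + (1 − AA*) on 𝒦_N and W = (F_0⋯F_{N−1}) V* (F_0⋯F_{N−1}) V. Then WA = VA; that is, V and W agree on im(A). -/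
open Matrix
open scoped Classical

lemma negK_negK {m k N : ℕ} (b : KIdx m k N) :
    (fun j => (slotNeg ((fun j' => (slotNeg (b j').1, (b j').2)) j).1,
      ((fun j' => (slotNeg (b j').1, (b j').2)) j).2)) = b := by
  funext j; simp [slotNeg]

lemma fConf_injective {m k N : ℕ} [NeZero N] :
    Function.Injective (fConf (m:=m) (k:=k) (N:=N)) := by
  rintro ⟨p, i, T⟩ ⟨p', i', T'⟩ h
  have hT : T = T' := funext fun j => congrArg (fun f => (f j).2) h
  have hi : i = i' := by
    by_contra hne
    have h1 := congrArg (fun f => (f i).1) h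
    simp only [fConf, if_pos rfl, if_true, if_neg hne] at h1
    rw [slotState, slotZero, Subtype.mk.injEq] at h1
    omega
  have hp : p = p' := by
    have h1 := congrArg (fun f => (f i).1) h
    rw [hi] at h1
    simp only [fConf, if_pos rfl, if_true] at h1
    rw [slotState, slotState, Subtype.mk.injEq] at h1
    exact Fin.ext (by omega)
  simp_all

lemma AhA {m k N : ℕ} [NeZero N] : (Amat m k N)ᴴ * Amat m k N = 1 := by
  ext c c'
  simp only [Matrix.mul_apply, Amat, conjTranspose_apply, of_apply, apply_ite (star (R := ℂ)),
    star_one, star_zero, ite_mul, one_mul, zero_mul]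
  rw [Finset.sum_ite_eq' Finset.univ (fConf c)]
  simp only [Finset.mem_univ, if_true, Matrix.one_apply]
  by_cases h : c = c'
  · simp [h]
  · rw [if_neg (fun hh => h (fConf_injective hh)), if_neg h]

lemma FF {m k N : ℕ} [NeZero N] : FallMat m k N * FallMat m k N = 1 := by
  ext b b'
  simp only [Matrix.mul_apply, FallMat, of_apply, mul_ite, mul_one, mul_zero]
  rw [Finset.sum_ite_eq' Finset.univ]
  simp only [Finset.mem_univ, if_true, Matrix.one_apply, negK_negK]

lemma FA {m k N : ℕ} [NeZero N] :
    FallMat m k N * Amat m k N =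
      Matrix.of fun b c => if b = (fun j => (slotNeg ((fConf c) j).1, ((fConf c) j).2)) then 1 else 0 := by
  ext b c
  simp only [Matrix.mul_apply, FallMat, Amat, of_apply, mul_ite, mul_one, mul_zero]
  rw [Finset.sum_ite_eq' Finset.univ]
  simp

lemma AhFA {m k N : ℕ} [NeZero N] :
    (Amat m k N)ᴴ * (FallMat m k N * Amat m k N) = 0 := by
  rw [FA]
  ext c c'
  simp only [Matrix.mul_apply, Amat, conjTranspose_apply, of_apply, apply_ite (star (R := ℂ)),
    star_one, star_zero, ite_mul, one_mul, zero_mul]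
  rw [Finset.sum_ite_eq' Finset.univ (fConf c)]
  simp only [Finset.mem_univ, if_true, Matrix.zero_apply]
  rw [if_neg]
  intro h
  have h1 := congrArg (fun f => ((f c'.2.1).1 : ℤ)) h
  simp only [fConf, if_pos rfl, slotNeg, slotState, slotZero] at h1
  by_cases hc : c'.2.1 = c.2.1 <;> simp [hc, slotState, slotZero] at h1 <;> omega

/-- With `V = A U_{δ,N} A* + (1 - A A*)` and `W = (F_0 ⋯ F_{N-1}) V* (F_0 ⋯ F_{N-1}) V`,
the operators `W` and `V` agree on the image of the isometry `A`, i.e. `W A = V A`. -/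
theorem statement13 {m k : ℕ} [NeZero m] [NeZero k] {N : ℕ} [NeZero N] (hN : 5 ≤ N)
    (δ : Fin m × Fin k → Fin m × Fin k × Bool → ℂ)
    (hδ : QTMkernelN m k N δ ∈ Matrix.unitaryGroup (ConfigN m k N) ℂ) :
    (FallMat m k N * (Vmat m k N δ)ᴴ * FallMat m k N * Vmat m k N δ) * Amat m k N =
      Vmat m k N δ * Amat m k N := by
  have h1 : Vmat m k N δ * Amat m k N = Amat m k N * QTMkernelN m k N δ := by
    unfold Vmat
    rw [Matrix.add_mul, Matrix.sub_mul, Matrix.one_mul,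
      Matrix.mul_assoc (Amat m k N * QTMkernelN m k N δ), AhA, Matrix.mul_one,
      Matrix.mul_assoc, AhA, Matrix.mul_one]
    abel
  have h2 : (Vmat m k N δ)ᴴ * (FallMat m k N * Amat m k N) = FallMat m k N * Amat m k N := by
    unfold Vmat
    simp only [conjTranspose_add, conjTranspose_sub, conjTranspose_one, conjTranspose_mul,
      conjTranspose_conjTranspose, Matrix.add_mul, Matrix.sub_mul, Matrix.one_mul,
      Matrix.mul_assoc, AhFA, Matrix.mul_zero, zero_add, sub_zero]
  rw [Matrix.mul_assoc (FallMat m k N * (Vmat m k N δ)ᴴ * FallMat m k N), h1]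
  rw [Matrix.mul_assoc (FallMat m k N * (Vmat m k N δ)ᴴ)]
  rw [← Matrix.mul_assoc (FallMat m k N) (Amat m k N) (QTMkernelN m k N δ)]
  rw [Matrix.mul_assoc (FallMat m k N) ((Vmat m k N δ)ᴴ)]
  rw [← Matrix.mul_assoc ((Vmat m k N δ)ᴴ) (FallMat m k N * Amat m k N) (QTMkernelN m k N δ)]
  rw [h2, ← Matrix.mul_assoc, ← Matrix.mul_assoc, FF, Matrix.one_mul]
end
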